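/- arXiv:1812.11367 — 2 statements merged into one kernel-verified Lean document; each statement's English description precedes it below -/
import Mathlib

section
/- Let f : [0,T) × [0,1] → ℝⁿ be a smooth solution of ∂ₜf = V + φτ, where V is the normal velocity and φ a smooth scalar function. Then the curvature vector satisfies ∇ₜκ = ∇ₛ²V + ⟨κ, V⟩ κ + φ ∇ₛκ on (0,T) × [0,1]. -/
open Set MeasureTheory
open scoped RealInnerProductSpace

noncomputable section

/-- Arc-length derivative `∂ₛ g = |∂ₓ f|⁻¹ ∂ₓ g` along the curve `f`. -/
def sDeriv {n : ℕ} {F : Type*} [NormedAddCommGroup F] [NormedSpace ℝ F]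
    (f : ℝ → EuclideanSpace ℝ (Fin n)) (g : ℝ → F) (x : ℝ) : F :=
  ‖deriv f x‖⁻¹ • deriv g x

/-- The unit tangent `τ = ∂ₛ f`. -/
def tau {n : ℕ} (f : ℝ → EuclideanSpace ℝ (Fin n)) : ℝ → EuclideanSpace ℝ (Fin n) :=
  sDeriv f f

/-- The curvature vector `κ = ∂ₛ² f`. -/
def kappa {n : ℕ} (f : ℝ → EuclideanSpace ℝ (Fin n)) : ℝ → EuclideanSpace ℝ (Fin n) :=
  sDeriv f (tau f)

/-- Normal projection of the arc-length derivative: `∇ₛψ = ∂ₛψ − ⟨∂ₛψ, τ⟩ τ`. -/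
def nablaS {n : ℕ} (f ψ : ℝ → EuclideanSpace ℝ (Fin n)) (x : ℝ) :
    EuclideanSpace ℝ (Fin n) :=
  sDeriv f ψ x - ⟪sDeriv f ψ x, tau f x⟫ • tau f x

/-- Partial time derivative of a time-dependent field. -/
def pT {F : Type*} [NormedAddCommGroup F] [NormedSpace ℝ F]
    (g : ℝ → ℝ → F) (t x : ℝ) : F :=
  deriv (fun s => g s x) t

/-- Normal projection of the time derivative: `∇ₜψ = ∂ₜψ − ⟨∂ₜψ, τ⟩ τ`. -/
def nablaT {n : ℕ} (f ψ : ℝ → ℝ → EuclideanSpace ℝ (Fin n)) (t x : ℝ) :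
    EuclideanSpace ℝ (Fin n) :=
  pT ψ t x - ⟪pT ψ t x, tau (f t) x⟫ • tau (f t) x


open Function Filter Topology

section Helpers

variable {F : Type*} [NormedAddCommGroup F] [NormedSpace ℝ F]
variable {E' : Type*} [NormedAddCommGroup E'] [NormedSpace ℝ E']

/-- From `C^∞` at a point, eventually `HasFDerivAt` with the `fderiv`. -/
lemma ContDiffAt.eventually_hasFDerivAt' {g : E' → F} {x : E'}
    (hg : ContDiffAt ℝ (⊤ : ℕ∞) g x) :
    ∀ᶠ y in 𝓝 x, HasFDerivAt g (fderiv ℝ g y) y := by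
  obtain ⟨u, hu, h'u⟩ : ∃ u ∈ 𝓝 x, ContDiffOn ℝ 1 g u :=
    hg.contDiffOn (m := 1) (by exact_mod_cast le_top) (by simp)
  rcases mem_nhds_iff.1 hu with ⟨v, vu, v_open, xv⟩
  filter_upwards [v_open.mem_nhds xv] with y hy
  have : DifferentiableAt ℝ g y :=
    ((h'u.mono vu y hy).contDiffAt (v_open.mem_nhds hy)).differentiableAt (by simp)
  exact this.hasFDerivAt

variable {g : ℝ → ℝ → F} {p : ℝ × ℝ}

lemma ev_partial_x (hg : ContDiffAt ℝ (⊤ : ℕ∞) (uncurry g) p) :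
    ∀ᶠ q : ℝ × ℝ in 𝓝 p, HasDerivAt (g q.1) (fderiv ℝ (uncurry g) q ((0:ℝ), (1:ℝ))) q.2 := by
  filter_upwards [hg.eventually_hasFDerivAt'] with q hq
  have h2 : HasDerivAt (fun y : ℝ => (q.1, y)) ((0:ℝ), (1:ℝ)) q.2 :=
    (hasDerivAt_const _ _).prodMk (hasDerivAt_id _)
  exact hq.comp_hasDerivAt q.2 h2

lemma ev_partial_t (hg : ContDiffAt ℝ (⊤ : ℕ∞) (uncurry g) p) :
    ∀ᶠ q : ℝ × ℝ in 𝓝 p, HasDerivAt (fun s => g s q.2) (fderiv ℝ (uncurry g) q ((1:ℝ), (0:ℝ))) q.1 := by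
  filter_upwards [hg.eventually_hasFDerivAt'] with q hq
  have h2 : HasDerivAt (fun s : ℝ => (s, q.2)) ((1:ℝ), (0:ℝ)) q.1 :=
    (hasDerivAt_id _).prodMk (hasDerivAt_const _ _)
  exact hq.comp_hasDerivAt q.1 h2

lemma contDiffAt_pX (hg : ContDiffAt ℝ (⊤ : ℕ∞) (uncurry g) p) :
    ContDiffAt ℝ (⊤ : ℕ∞) (uncurry (fun s y => deriv (g s) y)) p := by
  rw [contDiffAt_infty]
  intro m
  have h1 : ContDiffAt ℝ m (fun q : ℝ × ℝ => fderiv ℝ (uncurry g) q ((0:ℝ),(1:ℝ))) p :=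
    (hg.fderiv_right (by exact_mod_cast le_top)).clm_apply contDiffAt_const
  apply h1.congr_of_eventuallyEq
  filter_upwards [ev_partial_x hg] with q hq
  simpa [uncurry] using hq.deriv

lemma contDiffAt_pT (hg : ContDiffAt ℝ (⊤ : ℕ∞) (uncurry g) p) :
    ContDiffAt ℝ (⊤ : ℕ∞) (uncurry (fun s y => deriv (fun s' => g s' y) s)) p := by
  rw [contDiffAt_infty]
  intro m
  have h1 : ContDiffAt ℝ m (fun q : ℝ × ℝ => fderiv ℝ (uncurry g) q ((1:ℝ),(0:ℝ))) p :=
    (hg.fderiv_right (by exact_mod_cast le_top)).clm_apply contDiffAt_const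
  apply h1.congr_of_eventuallyEq
  filter_upwards [ev_partial_t hg] with q hq
  simpa [uncurry] using hq.deriv

end Helpers

section Helpers2

variable {F : Type*} [NormedAddCommGroup F] [NormedSpace ℝ F]
variable {g : ℝ → ℝ → F} {p : ℝ × ℝ}

/-- Second-order mixed partials: `∂ₓ (∂ₜ g) = (D²g)(0,1)(1,0)` etc. -/
lemma deriv_comm (hg : ContDiffAt ℝ (⊤ : ℕ∞) (uncurry g) p) :
    deriv (fun s => deriv (g s) p.2) p.1 = deriv (fun y => deriv (fun s => g s y) p.1) p.2 := by
  set u := uncurry g with hu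
  have hΦ : DifferentiableAt ℝ (fderiv ℝ u) p :=
    (hg.fderiv_right (m := 1) (by norm_cast)).differentiableAt (by simp)
  have hsym : ∀ v w : ℝ × ℝ, fderiv ℝ (fderiv ℝ u) p v w = fderiv ℝ (fderiv ℝ u) p w v :=
    hg.isSymmSndFDerivAt (by rw [minSmoothness_of_isRCLikeNormedField]; exact WithTop.coe_le_coe.2 le_top)
  -- LHS
  have hL : deriv (fun s => deriv (g s) p.2) p.1 = fderiv ℝ (fderiv ℝ u) p (1, 0) (0, 1) := by
    have h1 : ContDiffAt ℝ (⊤ : ℕ∞) (uncurry (fun s y => deriv (g s) y)) p := contDiffAt_pX hg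
    have h2 := ((ev_partial_t h1).self_of_nhds).deriv
    rw [show (fun s => deriv (g s) p.2) = (fun s => (fun s y => deriv (g s) y) s p.2) from rfl, h2]
    have hev : (uncurry (fun s y => deriv (g s) y)) =ᶠ[𝓝 p] fun q => fderiv ℝ u q (0, 1) := by
      filter_upwards [ev_partial_x hg] with q hq
      simpa [uncurry] using hq.deriv
    rw [hev.fderiv_eq]
    rw [fderiv_clm_apply hΦ (differentiableAt_const _)]
    simp
  -- RHS
  have hR : deriv (fun y => deriv (fun s => g s y) p.1) p.2
      = fderiv ℝ (fderiv ℝ u) p (0, 1) (1, 0) := by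
    have h1 : ContDiffAt ℝ (⊤ : ℕ∞) (uncurry (fun s y => deriv (fun s' => g s' y) s)) p :=
      contDiffAt_pT hg
    have h2 := ((ev_partial_x h1).self_of_nhds).deriv
    rw [show (fun y => deriv (fun s => g s y) p.1)
        = (fun y => (fun s y => deriv (fun s' => g s' y) s) p.1 y) from rfl, h2]
    have hev : (uncurry (fun s y => deriv (fun s' => g s' y) s)) =ᶠ[𝓝 p]
        fun q => fderiv ℝ u q (1, 0) := by
      filter_upwards [ev_partial_t hg] with q hq
      simpa [uncurry] using hq.deriv
    rw [hev.fderiv_eq]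
    rw [fderiv_clm_apply hΦ (differentiableAt_const _)]
    simp
  rw [hL, hR, hsym]

end Helpers2

section Helpers3

variable {F : Type*} [NormedAddCommGroup F] [NormedSpace ℝ F]

/-- smoothness of the derivative of a 1-variable smooth function -/
lemma contDiffAt_deriv' {g : ℝ → F} {x : ℝ} (hg : ContDiffAt ℝ (⊤ : ℕ∞) g x) :
    ContDiffAt ℝ (⊤ : ℕ∞) (deriv g) x := by
  rw [contDiffAt_infty]
  intro m
  have h1 : ContDiffAt ℝ m (fun y => fderiv ℝ g y (1:ℝ)) x :=
    (hg.fderiv_right (by exact_mod_cast le_top)).clm_apply contDiffAt_const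
  apply h1.congr_of_eventuallyEq
  exact Filter.Eventually.of_forall (fun y => (fderiv_apply_one_eq_deriv).symm)

lemma continuousAt_deriv' {g : ℝ → F} {x : ℝ} (hg : ContDiffAt ℝ (⊤ : ℕ∞) g x) :
    ContinuousAt (deriv g) x :=
  (contDiffAt_deriv' hg).continuousAt

/-- If two smooth functions agree on `[0,1]` near `x ∈ [0,1]`, their derivatives agree at `x`. -/
lemma deriv_eq_of_eqOn_Icc {g h : ℝ → F} {x : ℝ} (hx : x ∈ Set.Icc (0:ℝ) 1)
    (hg : ContDiffAt ℝ (⊤ : ℕ∞) g x) (hh : ContDiffAt ℝ (⊤ : ℕ∞) h x)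
    (heq : ∀ᶠ y in 𝓝 x, y ∈ Set.Icc (0:ℝ) 1 → g y = h y) :
    deriv g x = deriv h x := by
  obtain ⟨W, hWx, hWo, hW⟩ : ∃ W, x ∈ W ∧ IsOpen W ∧ ∀ y ∈ W, y ∈ Set.Icc (0:ℝ) 1 → g y = h y := by
    rcases mem_nhds_iff.1 heq with ⟨W, hWsub, hWo, hWx⟩
    exact ⟨W, hWx, hWo, fun y hy => hWsub hy⟩
  set S : Set ℝ := W ∩ Set.Ioo (0:ℝ) 1 with hS
  have hSder : ∀ y ∈ S, deriv g y = deriv h y := by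
    intro y hy
    apply Filter.EventuallyEq.deriv_eq
    filter_upwards [(hWo.inter isOpen_Ioo).mem_nhds hy] with z hz
    exact hW z hz.1 (Set.Ioo_subset_Icc_self hz.2)
  have hxcl : x ∈ closure S := by
    apply hWo.inter_closure
    refine ⟨hWx, ?_⟩
    rwa [closure_Ioo (by norm_num : (0:ℝ) ≠ 1)]
  have hne : (𝓝[S] x).NeBot := mem_closure_iff_nhdsWithin_neBot.1 hxcl
  have t1 : Filter.Tendsto (deriv g) (𝓝[S] x) (𝓝 (deriv g x)) :=
    (continuousAt_deriv' hg).continuousWithinAt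
  have t2 : Filter.Tendsto (deriv g) (𝓝[S] x) (𝓝 (deriv h x)) := by
    apply Filter.Tendsto.congr' _ ((continuousAt_deriv' hh).continuousWithinAt)
    filter_upwards [self_mem_nhdsWithin] with y hy
    exact (hSder y hy).symm
  exact tendsto_nhds_unique' hne t1 t2

variable {E : Type*} [NormedAddCommGroup E] [InnerProductSpace ℝ E]

/-- Derivative of the norm of a nonvanishing curve. -/
lemma hasDerivAt_norm_curve {u : ℝ → E} {u' : E} {x : ℝ}
    (hu : HasDerivAt u u' x) (h0 : u x ≠ 0) :
    HasDerivAt (fun y => ‖u y‖) (⟪u x, u'⟫ / ‖u x‖) x := by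
  have hi : HasDerivAt (fun y => ⟪u y, u y⟫) (⟪u x, u'⟫ + ⟪u', u x⟫) x := hu.inner ℝ hu
  have hne : ⟪u x, u x⟫ ≠ 0 := by
    simpa [inner_self_eq_zero] using h0
  have hs := hi.sqrt hne
  have hfun : (fun y => Real.sqrt ⟪u y, u y⟫) = fun y => ‖u y‖ := by
    funext y
    rw [real_inner_self_eq_norm_mul_norm, Real.sqrt_mul_self (norm_nonneg _)]
  rw [hfun] at hs
  convert hs using 1
  rw [real_inner_self_eq_norm_mul_norm, Real.sqrt_mul_self (norm_nonneg _),
    real_inner_comm u' (u x)]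
  have : ‖u x‖ ≠ 0 := norm_ne_zero_iff.2 h0
  field_simp
  ring

end Helpers3



section FlowHelpers

variable {n : ℕ}

/-- One-variable smoothness of `tau c` at a regular point. -/
lemma contDiffAt_tau {c : ℝ → EuclideanSpace ℝ (Fin n)} {x : ℝ}
    (hc : ContDiffAt ℝ (⊤ : ℕ∞) c x) (h0 : deriv c x ≠ 0) :
    ContDiffAt ℝ (⊤ : ℕ∞) (tau c) x := by
  have hd : ContDiffAt ℝ (⊤ : ℕ∞) (deriv c) x := contDiffAt_deriv' hc
  have : tau c = fun y => ‖deriv c y‖⁻¹ • deriv c y := rfl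
  rw [this]
  exact ((hd.norm ℝ h0).inv (norm_ne_zero_iff.2 h0)).smul hd

lemma contDiffAt_kappa {c : ℝ → EuclideanSpace ℝ (Fin n)} {x : ℝ}
    (hc : ContDiffAt ℝ (⊤ : ℕ∞) c x) (h0 : deriv c x ≠ 0) :
    ContDiffAt ℝ (⊤ : ℕ∞) (kappa c) x := by
  have hd : ContDiffAt ℝ (⊤ : ℕ∞) (deriv c) x := contDiffAt_deriv' hc
  have hdt : ContDiffAt ℝ (⊤ : ℕ∞) (deriv (tau c)) x := contDiffAt_deriv' (contDiffAt_tau hc h0)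
  have : kappa c = fun y => ‖deriv c y‖⁻¹ • deriv (tau c) y := rfl
  rw [this]
  exact ((hd.norm ℝ h0).inv (norm_ne_zero_iff.2 h0)).smul hdt

/-- `deriv (tau c) x = ‖deriv c x‖ • kappa c x`. -/
lemma deriv_tau_eq {c : ℝ → EuclideanSpace ℝ (Fin n)} {x : ℝ} (h0 : deriv c x ≠ 0) :
    deriv (tau c) x = ‖deriv c x‖ • kappa c x := by
  have : kappa c x = ‖deriv c x‖⁻¹ • deriv (tau c) x := rfl
  rw [this, smul_inv_smul₀ (norm_ne_zero_iff.2 h0)]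

/-- The curvature is orthogonal to the unit tangent. -/
lemma inner_kappa_tau {c : ℝ → EuclideanSpace ℝ (Fin n)} {x : ℝ}
    (hc : ContDiffAt ℝ (⊤ : ℕ∞) c x) (h0 : deriv c x ≠ 0) :
    ⟪kappa c x, tau c x⟫ = 0 := by
  have hev : ∀ᶠ y in 𝓝 x, deriv c y ≠ 0 :=
    (continuousAt_deriv' hc).eventually_ne h0
  have htau : DifferentiableAt ℝ (tau c) x :=
    (contDiffAt_tau hc h0).differentiableAt (by simp)
  have hone : (fun y => ⟪tau c y, tau c y⟫) =ᶠ[𝓝 x] fun _ => (1 : ℝ) := by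
    filter_upwards [hev] with y hy
    have : tau c y = ‖deriv c y‖⁻¹ • deriv c y := rfl
    rw [this, real_inner_smul_left, real_inner_smul_right, real_inner_self_eq_norm_mul_norm]
    have : ‖deriv c y‖ ≠ 0 := norm_ne_zero_iff.2 hy
    field_simp
  have hder : HasDerivAt (fun y => ⟪tau c y, tau c y⟫)
      (⟪tau c x, deriv (tau c) x⟫ + ⟪deriv (tau c) x, tau c x⟫) x :=
    htau.hasDerivAt.inner ℝ htau.hasDerivAt
  have h0' : deriv (fun y => ⟪tau c y, tau c y⟫) x = 0 := by
    rw [hone.deriv_eq]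
    exact deriv_const x 1
  rw [hder.deriv] at h0'
  rw [deriv_tau_eq h0] at h0'
  rw [real_inner_smul_left, real_inner_smul_right] at h0'
  have hn : ‖deriv c x‖ ≠ 0 := norm_ne_zero_iff.2 h0
  rw [real_inner_comm (kappa c x) (tau c x)] at h0'
  have h2 : ‖deriv c x‖ * ⟪kappa c x, tau c x⟫ = 0 := by linarith
  exact (mul_eq_zero.1 h2).resolve_left hn

/-- Spatial derivative (at time `t`) of the velocity field `pT f t`. This is the value of
`∂ₜ τ` by commuting derivatives. -/
def tauT (f : ℝ → ℝ → EuclideanSpace ℝ (Fin n)) (t x : ℝ) : EuclideanSpace ℝ (Fin n) :=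
  ‖deriv (f t) x‖⁻¹ • deriv (fun y => pT f t y) x
    - (⟪deriv (f t) x, deriv (fun y => pT f t y) x⟫ / ‖deriv (f t) x‖ ^ 3) • deriv (f t) x

variable {f : ℝ → ℝ → EuclideanSpace ℝ (Fin n)}

lemma hasDerivAt_dxf (hf : ContDiff ℝ (⊤ : ℕ∞) (uncurry f)) {t x : ℝ} :
    HasDerivAt (fun s => deriv (f s) x) (deriv (fun y => pT f t y) x) t := by
  have hDxf : ContDiffAt ℝ (⊤:ℕ∞) (uncurry (fun s y => deriv (f s) y)) (t, x) :=
    contDiffAt_pX hf.contDiffAt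
  have h1 : DifferentiableAt ℝ (fun s => deriv (f s) x) t :=
    HasDerivAt.differentiableAt ((ev_partial_t hDxf).self_of_nhds)
  have h2 := h1.hasDerivAt
  rwa [show deriv (fun s => deriv (f s) x) t = deriv (fun y => pT f t y) x from
    deriv_comm (p := (t, x)) hf.contDiffAt] at h2

lemma hasDerivAt_speed (hf : ContDiff ℝ (⊤ : ℕ∞) (uncurry f)) {t x : ℝ}
    (h0 : deriv (f t) x ≠ 0) :
    HasDerivAt (fun s => ‖deriv (f s) x‖)
      (⟪deriv (f t) x, deriv (fun y => pT f t y) x⟫ / ‖deriv (f t) x‖) t :=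
  hasDerivAt_norm_curve (hasDerivAt_dxf hf) h0

/-- Time derivative of the unit tangent. -/
lemma tau_pT (hf : ContDiff ℝ (⊤ : ℕ∞) (uncurry f)) {t x : ℝ} (h0 : deriv (f t) x ≠ 0) :
    HasDerivAt (fun s => tau (f s) x) (tauT f t x) t := by
  have hnz : ‖deriv (f t) x‖ ≠ 0 := norm_ne_zero_iff.2 h0
  have hde := hasDerivAt_dxf hf (t := t) (x := x)
  have hv := hasDerivAt_speed hf h0
  have hvinv := hv.inv hnz
  have hsmul := HasDerivAt.smul (c := fun s => ‖deriv (f s) x‖⁻¹) hvinv hde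
  have hfun : (fun s => tau (f s) x) = fun s => ‖deriv (f s) x‖⁻¹ • deriv (f s) x := rfl
  rw [hfun]
  refine hsmul.congr_deriv ?_
  rw [tauT]
  module

/-- Time derivative of the curvature vector (pure calculus form). -/
lemma kappa_pT (hf : ContDiff ℝ (⊤ : ℕ∞) (uncurry f)) {t x : ℝ} (h0 : deriv (f t) x ≠ 0) :
    HasDerivAt (fun s => kappa (f s) x)
      ((-(⟪deriv (f t) x, deriv (fun y => pT f t y) x⟫ / ‖deriv (f t) x‖)
          / ‖deriv (f t) x‖ ^ 2) • deriv (tau (f t)) x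
        + ‖deriv (f t) x‖⁻¹ • deriv (fun y => tauT f t y) x) t := by
  have hnz : ‖deriv (f t) x‖ ≠ 0 := norm_ne_zero_iff.2 h0
  have hvinv := (hasDerivAt_speed hf h0).inv hnz
  -- joint smoothness of the tangent field
  have hDxf : ContDiffAt ℝ (⊤:ℕ∞) (uncurry (fun s y => deriv (f s) y)) (t, x) :=
    contDiffAt_pX hf.contDiffAt
  have h0' : (uncurry (fun s y => deriv (f s) y)) (t, x) ≠ 0 := h0
  have hTau : ContDiffAt ℝ (⊤:ℕ∞) (uncurry (fun s y => tau (f s) y)) (t, x) := by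
    have : (uncurry (fun s y => tau (f s) y))
        = fun q : ℝ × ℝ => ‖(uncurry (fun s y => deriv (f s) y)) q‖⁻¹
            • (uncurry (fun s y => deriv (f s) y)) q := rfl
    rw [this]
    exact ((hDxf.norm ℝ h0').inv (norm_ne_zero_iff.2 h0')).smul hDxf
  have hDxTau : ContDiffAt ℝ (⊤:ℕ∞) (uncurry (fun s y => deriv (tau (f s)) y)) (t, x) :=
    contDiffAt_pX hTau
  -- time derivative of `deriv (tau (f s)) x`, via commuting and the formula `tauT`
  have hev : ∀ᶠ y in 𝓝 x, deriv (fun s => tau (f s) y) t = tauT f t y := by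
    have hcont : ContinuousAt (fun y => deriv (f t) y) x := by
      have := hDxf.continuousAt
      exact this.comp (Continuous.continuousAt (by continuity : Continuous fun y : ℝ => (t, y)))
    filter_upwards [hcont.eventually_ne h0] with y hy
    exact (tau_pT hf hy).deriv
  have hTT : HasDerivAt (fun s => deriv (tau (f s)) x) (deriv (fun y => tauT f t y) x) t := by
    have h1 : DifferentiableAt ℝ (fun s => deriv (tau (f s)) x) t :=
      HasDerivAt.differentiableAt ((ev_partial_t hDxTau).self_of_nhds)
    have h2 := h1.hasDerivAt
    have h3 : deriv (fun s => deriv (tau (f s)) x) t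
        = deriv (fun y => deriv (fun s => tau (f s) y) t) x := deriv_comm hTau
    have h4 : deriv (fun y => deriv (fun s => tau (f s) y) t) x
        = deriv (fun y => tauT f t y) x := Filter.EventuallyEq.deriv_eq hev
    rwa [h3, h4] at h2
  have hsmul := HasDerivAt.smul (c := fun s => ‖deriv (f s) x‖⁻¹) hvinv hTT
  have hfun : (fun s => kappa (f s) x) = fun s => ‖deriv (f s) x‖⁻¹ • deriv (tau (f s)) x := rfl
  rw [hfun]
  refine hsmul.congr_deriv ?_
  module

lemma contDiffAt_nablaS {c ψ : ℝ → EuclideanSpace ℝ (Fin n)} {x : ℝ}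
    (hc : ContDiffAt ℝ (⊤ : ℕ∞) c x) (hψ : ContDiffAt ℝ (⊤ : ℕ∞) ψ x)
    (h0 : deriv c x ≠ 0) : ContDiffAt ℝ (⊤ : ℕ∞) (nablaS c ψ) x := by
  have hsd : ContDiffAt ℝ (⊤ : ℕ∞) (fun y => sDeriv c ψ y) x := by
    exact (((contDiffAt_deriv' hc).norm ℝ h0).inv (norm_ne_zero_iff.2 h0)).smul
      (contDiffAt_deriv' hψ)
  have hτ := contDiffAt_tau hc h0
  exact hsd.sub ((hsd.inner ℝ hτ).smul hτ)

end FlowHelpers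


/-- Evolution of the curvature vector along the flow `∂ₜ f = V + φ τ`:
`∇ₜ κ = ∇ₛ² V + ⟨κ, V⟩ κ + φ ∇ₛ κ`. -/
theorem curvature_evolution {n : ℕ} (hn : 2 ≤ n) (T : ℝ) (hT : 0 < T)
    (f V : ℝ → ℝ → EuclideanSpace ℝ (Fin n)) (φ : ℝ → ℝ → ℝ)
    (hf : ContDiff ℝ (⊤ : ℕ∞) (Function.uncurry f))
    (hV : ContDiff ℝ (⊤ : ℕ∞) (Function.uncurry V))
    (hφ : ContDiff ℝ (⊤ : ℕ∞) (Function.uncurry φ))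
    (hreg : ∀ t ∈ Ico (0 : ℝ) T, ∀ x ∈ Icc (0 : ℝ) 1, deriv (f t) x ≠ 0)
    (hnormal : ∀ t ∈ Ico (0 : ℝ) T, ∀ x ∈ Icc (0 : ℝ) 1, ⟪V t x, tau (f t) x⟫ = 0)
    (hflow : ∀ t ∈ Ico (0 : ℝ) T, ∀ x ∈ Icc (0 : ℝ) 1,
      pT f t x = V t x + φ t x • tau (f t) x) :
    ∀ t ∈ Ioo (0 : ℝ) T, ∀ x ∈ Icc (0 : ℝ) 1,
      nablaT f (fun s => kappa (f s)) t x
        = nablaS (f t) (nablaS (f t) (V t)) x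
          + ⟪kappa (f t) x, V t x⟫ • kappa (f t) x
          + φ t x • nablaS (f t) (kappa (f t)) x := by
  intro t ht x hx
  have ht' : t ∈ Ico (0:ℝ) T := ⟨ht.1.le, ht.2⟩
  have hreg0 : deriv (f t) x ≠ 0 := hreg t ht' x hx
  have hnz : ‖deriv (f t) x‖ ≠ 0 := norm_ne_zero_iff.2 hreg0
  -- slices are smooth
  have hslice : ∀ {F : Type} [NormedAddCommGroup F] [NormedSpace ℝ F]
      (g : ℝ → ℝ → F), ContDiff ℝ (⊤ : ℕ∞) (uncurry g) → ∀ (s y : ℝ),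
      ContDiffAt ℝ (⊤ : ℕ∞) (g s) y := by
    intro F _ _ g hg s y
    exact ((hg.comp (contDiff_const.prodMk contDiff_id)).contDiffAt : ContDiffAt ℝ (⊤:ℕ∞) (fun y => g s y) y)
  have hfc : ∀ y, ContDiffAt ℝ (⊤ : ℕ∞) (f t) y := hslice f hf t
  have hVc : ∀ y, ContDiffAt ℝ (⊤ : ℕ∞) (V t) y := hslice V hV t
  have hφc : ∀ y, ContDiffAt ℝ (⊤ : ℕ∞) (φ t) y := hslice φ hφ t
  have hregev : ∀ᶠ y in 𝓝 x, deriv (f t) y ≠ 0 :=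
    (continuousAt_deriv' (hfc x)).eventually_ne hreg0
  -- the velocity field at time t, and its flow form
  set P : ℝ → EuclideanSpace ℝ (Fin n) := fun y => pT f t y with hPdef
  set W : ℝ → EuclideanSpace ℝ (Fin n) := fun y => V t y + φ t y • tau (f t) y with hWdef
  have hPsm : ∀ y, ContDiffAt ℝ (⊤ : ℕ∞) P y := by
    intro y
    exact ((contDiffAt_pT (g := f) (p := (t, y)) hf.contDiffAt).comp y
      ((contDiff_const.prodMk contDiff_id).contDiffAt) :
        ContDiffAt ℝ (⊤:ℕ∞) (fun y => pT f t y) y)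
  have hWsm : ∀ y, deriv (f t) y ≠ 0 → ContDiffAt ℝ (⊤ : ℕ∞) W y := by
    intro y hy
    exact (hVc y).add ((hφc y).smul (contDiffAt_tau (hfc y) hy))
  have hPW : ∀ y, deriv (f t) y ≠ 0 → y ∈ Icc (0:ℝ) 1 → deriv P y = deriv W y := by
    intro y hy hyIcc
    apply deriv_eq_of_eqOn_Icc hyIcc (hPsm y) (hWsm y hy)
    exact Eventually.of_forall (fun z hz => hflow t ht' z hz)
  have hPWx : deriv P x = deriv W x := hPW x hreg0 hx
  -- second substitution: `tauT f t` agrees with the `W`-version on `[0,1]`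
  set WT : ℝ → EuclideanSpace ℝ (Fin n) := fun y =>
      ‖deriv (f t) y‖⁻¹ • deriv W y
        - (⟪deriv (f t) y, deriv W y⟫ / ‖deriv (f t) y‖ ^ 3) • deriv (f t) y with hWTdef
  have hWTsm : ContDiffAt ℝ (⊤ : ℕ∞) WT x := by
    have hdf : ContDiffAt ℝ (⊤:ℕ∞) (deriv (f t)) x := contDiffAt_deriv' (hfc x)
    have hdW : ContDiffAt ℝ (⊤:ℕ∞) (deriv W) x := contDiffAt_deriv' (hWsm x hreg0)
    have hninv : ContDiffAt ℝ (⊤:ℕ∞) (fun y => ‖deriv (f t) y‖⁻¹) x :=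
      (hdf.norm ℝ hreg0).inv hnz
    rw [hWTdef]
    exact (hninv.smul hdW).sub (((hdf.inner ℝ hdW).div
      ((hdf.norm ℝ hreg0).pow 3) (by positivity)).smul hdf)
  have htauTsm : ContDiffAt ℝ (⊤ : ℕ∞) (fun y => tauT f t y) x := by
    have hdf : ContDiffAt ℝ (⊤:ℕ∞) (deriv (f t)) x := contDiffAt_deriv' (hfc x)
    have hdP : ContDiffAt ℝ (⊤:ℕ∞) (deriv P) x := contDiffAt_deriv' (hPsm x)
    have hninv : ContDiffAt ℝ (⊤:ℕ∞) (fun y => ‖deriv (f t) y‖⁻¹) x :=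
      (hdf.norm ℝ hreg0).inv hnz
    exact (hninv.smul hdP).sub (((hdf.inner ℝ hdP).div
      ((hdf.norm ℝ hreg0).pow 3) (by positivity)).smul hdf)
  have h2nd : deriv (fun y => tauT f t y) x = deriv WT x := by
    apply deriv_eq_of_eqOn_Icc hx htauTsm hWTsm
    filter_upwards [hregev] with y hy hyIcc
    have hd := hPW y hy hyIcc
    rw [hPdef] at hd
    rw [tauT, hWTdef]
    rw [show deriv (fun y' => pT f t y') y = deriv W y from hd]
  have hκτ : ∀ y, deriv (f t) y ≠ 0 → ⟪kappa (f t) y, tau (f t) y⟫ = 0 :=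
    fun y hy => inner_kappa_tau (hfc y) hy
  -- spatial identity : WT = ∇ₛV + φ κ  near x
  have hWT_ev : ∀ᶠ y in 𝓝 x, WT y = nablaS (f t) (V t) y + φ t y • kappa (f t) y := by
    filter_upwards [hregev] with y hy
    have hnzy : ‖deriv (f t) y‖ ≠ 0 := norm_ne_zero_iff.2 hy
    have hVd : HasDerivAt (V t) (deriv (V t) y) y :=
      ((hVc y).differentiableAt (by simp)).hasDerivAt
    have hφd : HasDerivAt (φ t) (deriv (φ t) y) y :=
      ((hφc y).differentiableAt (by simp)).hasDerivAt
    have hτd : HasDerivAt (tau (f t)) (‖deriv (f t) y‖ • kappa (f t) y) y := by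
      have := ((contDiffAt_tau (hfc y) hy).differentiableAt
        (by simp)).hasDerivAt
      rwa [deriv_tau_eq hy] at this
    have hdWy : deriv W y = deriv (V t) y
        + (φ t y • (‖deriv (f t) y‖ • kappa (f t) y) + deriv (φ t) y • tau (f t) y) := by
      rw [hWdef]
      exact (hVd.add (hφd.smul hτd)).deriv
    have hee : ⟪deriv (f t) y, deriv (f t) y⟫ = ‖deriv (f t) y‖ * ‖deriv (f t) y‖ :=
      real_inner_self_eq_norm_mul_norm _
    have hκe : ⟪kappa (f t) y, deriv (f t) y⟫ = 0 := by
      have h := hκτ y hy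
      rw [show tau (f t) y = ‖deriv (f t) y‖⁻¹ • deriv (f t) y from rfl,
        real_inner_smul_right] at h
      rcases mul_eq_zero.1 h with h' | h'
      · exact absurd h' (inv_ne_zero hnzy)
      · exact h'
    have heκ : ⟪deriv (f t) y, kappa (f t) y⟫ = 0 := by
      rw [real_inner_comm]; exact hκe
    have hcm : ⟪deriv (f t) y, deriv (V t) y⟫ = ⟪deriv (V t) y, deriv (f t) y⟫ :=
      real_inner_comm _ _
    rw [hWTdef]
    dsimp only
    rw [hdWy, nablaS,
      show sDeriv (f t) (V t) y = ‖deriv (f t) y‖⁻¹ • deriv (V t) y from rfl,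
      show tau (f t) y = ‖deriv (f t) y‖⁻¹ • deriv (f t) y from rfl]
    simp only [inner_add_right, inner_add_left, real_inner_smul_right, real_inner_smul_left,
      heκ, hκe, hee, hcm]
    match_scalars <;> field_simp <;> ring
  -- derivative of WT at x
  have hκsm : ContDiffAt ℝ (⊤:ℕ∞) (kappa (f t)) x := contDiffAt_kappa (hfc x) hreg0
  have hNsm : ContDiffAt ℝ (⊤:ℕ∞) (nablaS (f t) (V t)) x :=
    contDiffAt_nablaS (hfc x) (hVc x) hreg0
  have hφdx : HasDerivAt (φ t) (deriv (φ t) x) x :=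
    ((hφc x).differentiableAt (by simp)).hasDerivAt
  have hNd : deriv WT x = deriv (nablaS (f t) (V t)) x
      + (φ t x • deriv (kappa (f t)) x + deriv (φ t) x • kappa (f t) x) := by
    rw [Filter.EventuallyEq.deriv_eq hWT_ev]
    have h1 : HasDerivAt (nablaS (f t) (V t)) (deriv (nablaS (f t) (V t)) x) x :=
      (hNsm.differentiableAt (by simp)).hasDerivAt
    have h2 : HasDerivAt (kappa (f t)) (deriv (kappa (f t)) x) x :=
      (hκsm.differentiableAt (by simp)).hasDerivAt
    exact (h1.add (hφdx.smul h2)).deriv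
  -- normality: ⟪∂ₛV, τ⟫ = -v ⟪V, κ⟫ at x
  have hτdx : HasDerivAt (tau (f t)) (‖deriv (f t) x‖ • kappa (f t) x) x := by
    have := ((contDiffAt_tau (hfc x) hreg0).differentiableAt
      (by simp)).hasDerivAt
    rwa [deriv_tau_eq hreg0] at this
  have hVdx : HasDerivAt (V t) (deriv (V t) x) x :=
    ((hVc x).differentiableAt (by simp)).hasDerivAt
  have hVτ : ⟪deriv (V t) x, tau (f t) x⟫
      = -(‖deriv (f t) x‖ * ⟪V t x, kappa (f t) x⟫) := by
    have hz : deriv (fun y => ⟪V t y, tau (f t) y⟫) x = 0 := by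
      have hsm1 : ContDiffAt ℝ (⊤:ℕ∞) (fun y => ⟪V t y, tau (f t) y⟫) x :=
        (hVc x).inner ℝ (contDiffAt_tau (hfc x) hreg0)
      rw [deriv_eq_of_eqOn_Icc hx hsm1 contDiffAt_const
        (Eventually.of_forall (fun z hz => hnormal t ht' z hz))]
      exact deriv_const x 0
    have h := (hVdx.inner ℝ hτdx).deriv
    rw [hz] at h
    rw [real_inner_smul_right] at h
    linarith
  -- spatial expansion of deriv W at x
  have hdWx : deriv W x = deriv (V t) x
      + (φ t x • (‖deriv (f t) x‖ • kappa (f t) x) + deriv (φ t) x • tau (f t) x) := by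
    rw [hWdef]
    exact (hVdx.add (hφdx.smul hτdx)).deriv
  -- scalar facts at x
  have hee0 : ⟪deriv (f t) x, deriv (f t) x⟫ = ‖deriv (f t) x‖ * ‖deriv (f t) x‖ :=
    real_inner_self_eq_norm_mul_norm _
  have hκe0 : ⟪kappa (f t) x, deriv (f t) x⟫ = 0 := by
    have h := hκτ x hreg0
    rw [show tau (f t) x = ‖deriv (f t) x‖⁻¹ • deriv (f t) x from rfl,
      real_inner_smul_right] at h
    rcases mul_eq_zero.1 h with h' | h'
    · exact absurd h' (inv_ne_zero hnz)
    · exact h'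
  have heκ0 : ⟪deriv (f t) x, kappa (f t) x⟫ = 0 := by
    rw [real_inner_comm]; exact hκe0
  have heV0 : ⟪deriv (f t) x, deriv (V t) x⟫
      = -(‖deriv (f t) x‖ * (‖deriv (f t) x‖ * ⟪V t x, kappa (f t) x⟫)) := by
    have h1 : ⟪deriv (V t) x, tau (f t) x⟫
        = ‖deriv (f t) x‖⁻¹ * ⟪deriv (V t) x, deriv (f t) x⟫ := by
      rw [show tau (f t) x = ‖deriv (f t) x‖⁻¹ • deriv (f t) x from rfl,
        real_inner_smul_right]
    have h2 : ⟪deriv (V t) x, deriv (f t) x⟫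
        = ‖deriv (f t) x‖ * (‖deriv (f t) x‖⁻¹ * ⟪deriv (V t) x, deriv (f t) x⟫) := by
      rw [← mul_assoc, mul_inv_cancel₀ hnz, one_mul]
    rw [real_inner_comm, h2, ← h1, hVτ]
    ring
  -- the key time-derivative identity
  have hK := (kappa_pT hf hreg0).deriv
  rw [h2nd, hNd, deriv_tau_eq hreg0,
    show deriv (fun y => pT f t y) x = deriv W x from by rw [hPdef] at hPWx; exact hPWx,
    hdWx] at hK
  have hKval : deriv (fun s => kappa (f s) x) t
      = sDeriv (f t) (nablaS (f t) (V t)) x + ⟪kappa (f t) x, V t x⟫ • kappa (f t) x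
        + φ t x • sDeriv (f t) (kappa (f t)) x := by
    rw [hK]
    rw [show sDeriv (f t) (nablaS (f t) (V t)) x
      = ‖deriv (f t) x‖⁻¹ • deriv (nablaS (f t) (V t)) x from rfl]
    rw [show sDeriv (f t) (kappa (f t)) x
      = ‖deriv (f t) x‖⁻¹ • deriv (kappa (f t)) x from rfl]
    rw [show tau (f t) x = ‖deriv (f t) x‖⁻¹ • deriv (f t) x from rfl]
    rw [real_inner_comm (V t x) (kappa (f t) x)]
    simp only [inner_add_right, inner_add_left, real_inner_smul_right, real_inner_smul_left,
      heκ0, hκe0, hee0, heV0]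
    match_scalars <;> field_simp <;> ring
  -- final assembly
  have hκτ0 : ⟪kappa (f t) x, tau (f t) x⟫ = 0 := hκτ x hreg0
  rw [nablaT,
    show pT (fun s => kappa (f s)) t x = deriv (fun s => kappa (f s) x) t from rfl, hKval]
  rw [nablaS, nablaS]
  rw [inner_add_left, inner_add_left, real_inner_smul_left, real_inner_smul_left, hκτ0]
  module
end
end

section
/- Let f : [0,1] → ℝⁿ be a regular smooth curve with curvature vector κ. Then for all k ∈ ℕ, all real p ≥ 2 and all integers 0 ≤ i < k, there is a constant C = C(n,k,p) such that ‖∇ₛⁱκ‖_p ≤ C ‖κ‖₂^{1−α} ‖κ‖_{k,2}^{α}, where α = (i + ½ − 1/p)/k and the norms are the scale-invariant norms. -/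
open Set MeasureTheory
open scoped RealInnerProductSpace

noncomputable section

/-- Iterated normal arc-length derivative `∇ₛ^m`. -/
def nablaSIter {n : ℕ} (f : ℝ → EuclideanSpace ℝ (Fin n)) :
    ℕ → (ℝ → EuclideanSpace ℝ (Fin n)) → ℝ → EuclideanSpace ℝ (Fin n)
  | 0, ψ => ψ
  | m + 1, ψ => nablaS f (nablaSIter f m ψ)

/-- Length of the curve `f` over `[0,1]`. -/
def curveLen {n : ℕ} (f : ℝ → EuclideanSpace ℝ (Fin n)) : ℝ :=
  ∫ x in (0 : ℝ)..1, ‖deriv f x‖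

/-- Scale-invariant norm `‖∇ₛⁱκ‖_p = L(f)^{i+1-1/p} (∫₀¹ |∇ₛⁱκ|^p ds)^{1/p}`. -/
def knorm {n : ℕ} (f : ℝ → EuclideanSpace ℝ (Fin n)) (i : ℕ) (p : ℝ) : ℝ :=
  curveLen f ^ ((i : ℝ) + 1 - 1 / p) *
    (∫ x in (0 : ℝ)..1, ‖nablaSIter f i (kappa f) x‖ ^ p * ‖deriv f x‖) ^ (1 / p)

/-- Scale-invariant norm `‖κ‖_{k,p} = Σ_{i=0}^{k} ‖∇ₛⁱκ‖_p`. -/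
def knormSum {n : ℕ} (f : ℝ → EuclideanSpace ℝ (Fin n)) (k : ℕ) (p : ℝ) : ℝ :=
  ∑ i ∈ Finset.range (k + 1), knorm f i p


open Finset

private lemma GN_le_of_forall_eps {b K : ℝ} (hK : 0 ≤ K)
    (h : ∀ ε : ℝ, 0 < ε → ε ≤ 1 → b ≤ K * ε) : b ≤ 0 := by
  by_contra hb
  push_neg at hb
  have hKpos : 0 < K + 1 := by linarith
  have hε0 : 0 < min 1 (b / (2 * (K + 1))) := by
    apply lt_min one_pos
    positivity
  have hε1 : min 1 (b / (2 * (K + 1))) ≤ 1 := min_le_left _ _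
  have := h _ hε0 hε1
  have h2 : K * min 1 (b / (2 * (K + 1))) ≤ K * (b / (2 * (K + 1))) :=
    mul_le_mul_of_nonneg_left (min_le_right _ _) hK
  have h3 : K * (b / (2 * (K + 1))) < b := by
    rw [div_eq_inv_mul, ← mul_assoc]
    have : K * (2 * (K + 1))⁻¹ < 1 := by
      rw [mul_inv_lt_iff₀ (by positivity)]
      linarith
    nlinarith
  linarith

private lemma GN_eps_step {a b c sa sb ε : ℝ} (ha : 0 ≤ a) (hb : 0 ≤ b) (hc : 0 ≤ c)
    (hsa : 0 ≤ sa) (hsb : 0 ≤ sb)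
    (h1 : sa ^ 2 ≤ 2 * a * b + a ^ 2) (h2 : sb ^ 2 ≤ 2 * b * c + b ^ 2)
    (h3 : b ^ 2 ≤ 2 * sa * sb + a * c)
    (he0 : 0 < ε) (he1 : ε ≤ 1) : b ≤ 50 * (ε * c + ε⁻¹ * a) := by
  have key : ε * b ≤ 2 * ε ^ 2 * c + 50 * a := by
    have hsq : (ε * b) ^ 2 ≤ (2 * ε ^ 2 * c + 50 * a) ^ 2 := by
      nlinarith [mul_nonneg (sq_nonneg ε) (sub_nonneg.2 h3),
        mul_nonneg he0.le (sq_nonneg (ε * sb - 8 * sa)),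
        mul_nonneg (mul_nonneg (mul_nonneg he0.le he0.le) he0.le) (sub_nonneg.2 h2),
        mul_nonneg (sq_nonneg ε) (sq_nonneg (b - ε * c)),
        mul_nonneg he0.le (sub_nonneg.2 h1),
        sq_nonneg (ε * b / 4 - 32 * a), sq_nonneg (ε ^ 2 * c - a),
        mul_nonneg (sub_nonneg.2 he1) (mul_nonneg (sq_nonneg ε) (sq_nonneg b)),
        mul_nonneg (sub_nonneg.2 he1) (sq_nonneg a),
        mul_nonneg ha hc, mul_nonneg ha hb, mul_nonneg hb hc, he0.le,
        mul_nonneg (mul_nonneg ha hc) (sq_nonneg ε)]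
    have h2c : (0:ℝ) ≤ 2 * ε ^ 2 * c + 50 * a := by positivity
    have hεb : (0:ℝ) ≤ ε * b := by positivity
    nlinarith [hsq, h2c, hεb]
  have hfin : ε * b ≤ ε * (50 * (ε * c + ε⁻¹ * a)) := by
    have : ε * (50 * (ε * c + ε⁻¹ * a)) = 50 * ε ^ 2 * c + 50 * a := by
      field_simp
    rw [this]
    nlinarith [sq_nonneg ε, mul_nonneg (sq_nonneg ε) hc]
  exact le_of_mul_le_mul_left hfin he0

private lemma GN_chain (k : ℕ) (hk : 0 < k) (a S : ℕ → ℝ)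
    (ha : ∀ j, 0 ≤ a j) (hS : ∀ j, 0 ≤ S j)
    (hAg : ∀ j, j < k → S j ^ 2 ≤ 2 * a j * a (j + 1) + a j ^ 2)
    (hIBP : ∀ j, 1 ≤ j → j < k → a j ^ 2 ≤ 2 * S (j - 1) * S j + a (j - 1) * a (j + 1)) :
    ∀ j, j ≤ k → a j ≤ (10000 : ℝ) ^ (k * k) *
      (a 0 ^ (1 - (j : ℝ) / k) * (∑ m ∈ Finset.range (k + 1), a m) ^ ((j : ℝ) / k)) := by
  set B := ∑ m ∈ Finset.range (k + 1), a m with hBdef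
  have hBnn : 0 ≤ B := Finset.sum_nonneg fun m _ => ha m
  have haB : ∀ j, j ≤ k → a j ≤ B := by
    intro j hj
    exact Finset.single_le_sum (fun m _ => ha m) (Finset.mem_range.2 (Nat.lt_succ_of_le hj))
  have hkR : (0:ℝ) < k := Nat.cast_pos.2 hk
  have hCk1 : (1:ℝ) ≤ (10000 : ℝ) ^ (k * k) := one_le_pow₀ (by norm_num)
  have estep : ∀ j, 1 ≤ j → j < k → ∀ ε : ℝ, 0 < ε → ε ≤ 1 →
      a j ≤ 50 * (ε * a (j + 1) + ε⁻¹ * a (j - 1)) := by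
    intro j hj1 hjk ε he0 he1
    have hj1' : j - 1 + 1 = j := Nat.succ_pred_eq_of_pos hj1
    have hAg1 : S (j-1) ^ 2 ≤ 2 * a (j-1) * a j + a (j-1) ^ 2 := by
      have := hAg (j-1) (lt_of_le_of_lt (Nat.sub_le j 1) hjk)
      rwa [hj1'] at this
    exact GN_eps_step (ha _) (ha _) (ha _) (hS _) (hS _) hAg1 (hAg j hjk)
      (hIBP j hj1 hjk) he0 he1
  rcases eq_or_lt_of_le (ha 0) with ha0 | ha0
  · -- a 0 = 0 : all a j = 0 for j < k
    have hzero : ∀ j, j < k → a j = 0 := by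
      intro j
      induction j with
      | zero => intro _; exact ha0.symm
      | succ m ih =>
        intro hmk
        have hm : a m = 0 := ih (Nat.lt_of_succ_lt hmk)
        have hstep : ∀ ε : ℝ, 0 < ε → ε ≤ 1 → a (m+1) ≤ 50 * B * ε := by
          intro ε he0 he1
          have h0 := estep (m+1) (Nat.le_add_left 1 m) hmk ε he0 he1
          simp only [Nat.add_sub_cancel, hm, mul_zero, add_zero] at h0
          have h2 : 50 * (ε * a (m + 1 + 1)) ≤ 50 * (ε * B) :=
            mul_le_mul_of_nonneg_left (mul_le_mul_of_nonneg_left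
              (haB _ hmk) he0.le) (by norm_num)
          calc a (m+1) ≤ 50 * (ε * a (m + 1 + 1)) := by linarith
            _ ≤ 50 * (ε * B) := h2
            _ = 50 * B * ε := by ring
        have := GN_le_of_forall_eps (by positivity) hstep
        exact le_antisymm this (ha _)
    intro j hj
    rcases lt_or_eq_of_le hj with hjlt | hjeq
    · rw [hzero j hjlt]
      positivity
    · rw [hjeq]
      have he1 : (1 : ℝ) - (k : ℝ) / k = 0 := by field_simp; norm_num
      have he2 : (k : ℝ) / k = 1 := by field_simp
      rw [he1, he2, Real.rpow_zero, Real.rpow_one, one_mul]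
      calc a k ≤ B := haB k le_rfl
        _ ≤ (10000 : ℝ) ^ (k * k) * B := le_mul_of_one_le_left hBnn hCk1
  · -- main case : a 0 > 0
    have hB : 0 < B := lt_of_lt_of_le ha0 (haB 0 (Nat.zero_le k))
    set w : ℝ := (1 : ℝ) / k with hwdef
    set r : ℝ := a 0 ^ w / B ^ w with hrdef
    have hBw : 0 < B ^ w := Real.rpow_pos_of_pos hB w
    have ha0w : 0 < a 0 ^ w := Real.rpow_pos_of_pos ha0 w
    have hr0 : 0 < r := div_pos ha0w hBw
    have hr1 : r ≤ 1 := by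
      rw [hrdef, div_le_one hBw]
      exact Real.rpow_le_rpow (le_of_lt ha0) (haB 0 (Nat.zero_le k)) (by positivity)
    set g : ℕ → ℝ := fun j => a 0 ^ (1 - (j : ℝ) / k) * B ^ ((j : ℝ) / k) with hgdef
    have hgpos : ∀ j, 0 < g j := fun j =>
      mul_pos (Real.rpow_pos_of_pos ha0 _) (Real.rpow_pos_of_pos hB _)
    have hgstep : ∀ j : ℕ, g (j + 1) * r = g j := by
      intro j
      have c1 : (((j + 1 : ℕ)) : ℝ) = (j : ℝ) + 1 := by push_cast; ring
      have e1 : (1 : ℝ) - ((j : ℝ) + 1) / k + w = 1 - (j : ℝ) / k := by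
        rw [hwdef]; field_simp; ring
      have e2 : ((j : ℝ) + 1) / k - w = (j : ℝ) / k := by
        rw [hwdef]; field_simp; ring
      simp only [hgdef, hrdef, c1]
      calc a 0 ^ (1 - ((j:ℝ) + 1) / k) * B ^ (((j:ℝ) + 1) / k) * (a 0 ^ w / B ^ w)
          = (a 0 ^ (1 - ((j:ℝ)+1)/k) * a 0 ^ w) * (B ^ (((j:ℝ)+1)/k) / B ^ w) := by ring
        _ = a 0 ^ (1 - ((j:ℝ)+1)/k + w) * B ^ (((j:ℝ)+1)/k - w) := by
            rw [← Real.rpow_add ha0, ← Real.rpow_sub hB]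
        _ = a 0 ^ (1 - (j:ℝ)/k) * B ^ ((j:ℝ)/k) := by rw [e1, e2]
    have g0 : g 0 = a 0 := by
      simp only [hgdef]
      norm_num
    have gk : g k = B := by
      simp only [hgdef]
      have e1 : (1 : ℝ) - (k : ℝ) / k = 0 := by field_simp; norm_num
      have e2 : (k : ℝ) / k = 1 := by field_simp
      rw [e1, e2, Real.rpow_zero, Real.rpow_one, one_mul]
    have tstep : ∀ j, 1 ≤ j → j < k → ∀ t : ℝ, 0 < t → t ≤ 1 →
        a j / g j ≤ 50 * (t * (a (j+1) / g (j+1)) + t⁻¹ * (a (j-1) / g (j-1))) := by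
      intro j hj1 hjk t ht0 ht1
      have hj1' : j - 1 + 1 = j := Nat.succ_pred_eq_of_pos hj1
      have he := estep j hj1 hjk (t * r) (mul_pos ht0 hr0) (mul_le_one₀ ht1 hr0.le hr1)
      have hg1 : g (j - 1) = g j * r := by
        have := hgstep (j-1); rw [hj1'] at this; exact this.symm
      have hg2 : g (j + 1) = g j / r := by
        rw [eq_div_iff hr0.ne']; exact hgstep j
      rw [div_le_iff₀ (hgpos j)]
      have expand : 50 * (t * (a (j+1) / g (j+1)) + t⁻¹ * (a (j-1) / g (j-1))) * g j
          = 50 * ((t * r) * a (j+1) + (t * r)⁻¹ * a (j-1)) := by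
        rw [hg2, hg1]
        have hgj := (hgpos j).ne'
        field_simp
      rw [expand]; exact he
    have hdesc : ∀ m : ℕ, ∀ j : ℕ, 1 ≤ j → j + m = k →
        a j / g j ≤ (10000:ℝ)^m * max (a (j-1) / g (j-1)) 1 := by
      intro m
      induction m with
      | zero =>
        intro j hj1 hjk
        have hjeq : j = k := by omega
        subst hjeq
        have hxk : a j / g j ≤ 1 := by
          rw [gk, div_le_one hB]; exact haB j le_rfl
        calc a j / g j ≤ 1 := hxk
          _ ≤ (10000:ℝ)^0 * max (a (j-1) / g (j-1)) 1 := by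
              rw [pow_zero, one_mul]; exact le_max_right _ _
      | succ m ih =>
        intro j hj1 hjk
        have hjk' : j < k := by omega
        have hx1 : a (j+1) / g (j+1) ≤ (10000:ℝ)^m * max (a j / g j) 1 := by
          have := ih (j+1) (by omega) (by omega)
          simpa using this
        set t : ℝ := ((100:ℝ) * 10000^m)⁻¹ with htdef
        have hpm : (0:ℝ) < 10000^m := by positivity
        have ht0 : 0 < t := by positivity
        have ht1 : t ≤ 1 := by
          rw [htdef]
          have h1 : (1:ℝ) ≤ 100 * 10000^m := by
            have : (1:ℝ) ≤ 10000^m := one_le_pow₀ (by norm_num)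
            nlinarith
          exact inv_le_one_of_one_le₀ h1
        have hts := tstep j hj1 hjk' t ht0 ht1
        have htinv : t⁻¹ = 100 * 10000^m := by rw [htdef, inv_inv]
        have hXnn : 0 ≤ a j / g j := div_nonneg (ha j) (hgpos j).le
        have hXmnn : 0 ≤ a (j-1) / g (j-1) := div_nonneg (ha _) (hgpos _).le
        have hmaxm : (1:ℝ) ≤ max (a (j-1) / g (j-1)) 1 := le_max_right _ _
        have hmaxm0 : a (j-1) / g (j-1) ≤ max (a (j-1) / g (j-1)) 1 := le_max_left _ _
        rcases le_or_gt (a j / g j) 1 with hX1 | hX1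
        · calc a j / g j ≤ 1 := hX1
            _ ≤ (10000:ℝ)^(m+1) * max (a (j-1) / g (j-1)) 1 := by
                have h1 : (1:ℝ) ≤ (10000:ℝ)^(m+1) := one_le_pow₀ (by norm_num)
                nlinarith
        · have hmax : max (a j / g j) 1 = a j / g j := max_eq_left hX1.le
          rw [hmax] at hx1
          have hhalf : 50 * t * (10000:ℝ)^m = 1/2 := by
            rw [htdef]; field_simp; ring
          have step2 : a j / g j ≤ (1/2) * (a j / g j) + 5000 * 10000^m * (a (j-1) / g (j-1)) := by
            have e3 : 50 * (t * (a (j+1) / g (j+1)) + t⁻¹ * (a (j-1) / g (j-1)))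
                = 50 * t * (a (j+1) / g (j+1)) + 5000 * 10000^m * (a (j-1) / g (j-1)) := by
              rw [htinv]; ring
            rw [e3] at hts
            have e4 : 50 * t * (a (j+1) / g (j+1)) ≤ (1/2) * (a j / g j) := by
              have := mul_le_mul_of_nonneg_left hx1 (by positivity : (0:ℝ) ≤ 50 * t)
              calc 50 * t * (a (j+1) / g (j+1)) ≤ 50 * t * ((10000:ℝ)^m * (a j / g j)) := this
                _ = (50 * t * (10000:ℝ)^m) * (a j / g j) := by ring
                _ = (1/2) * (a j / g j) := by rw [hhalf]
            linarith
          calc a j / g j ≤ 10000 * 10000^m * (a (j-1) / g (j-1)) := by linarith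
            _ ≤ (10000:ℝ)^(m+1) * max (a (j-1) / g (j-1)) 1 := by
                rw [pow_succ]
                have := mul_le_mul_of_nonneg_left hmaxm0 (by positivity : (0:ℝ) ≤ 10000 * 10000^m)
                calc 10000 * 10000^m * (a (j-1) / g (j-1))
                    ≤ 10000 * 10000^m * max (a (j-1) / g (j-1)) 1 := this
                  _ = (10000:ℝ)^m * 10000 * max (a (j-1) / g (j-1)) 1 := by ring
    have hasc : ∀ j, j ≤ k → max (a j / g j) 1 ≤ (10000:ℝ)^(k*j) := by
      intro j
      induction j with
      | zero =>
        intro _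
        have : a 0 / g 0 = 1 := by rw [g0, div_self ha0.ne']
        rw [this, max_self, Nat.mul_zero, pow_zero]
      | succ m ih =>
        intro hm1k
        have ihm := ih (by omega)
        have hx : a (m+1) / g (m+1) ≤ (10000:ℝ)^(k-(m+1)) * max (a m / g m) 1 := by
          have := hdesc (k-(m+1)) (m+1) (by omega) (by omega)
          simpa using this
        have h2 : a (m+1) / g (m+1) ≤ (10000:ℝ)^(k-(m+1)) * (10000:ℝ)^(k*m) := by
          calc a (m+1) / g (m+1) ≤ (10000:ℝ)^(k-(m+1)) * max (a m / g m) 1 := hx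
            _ ≤ (10000:ℝ)^(k-(m+1)) * (10000:ℝ)^(k*m) :=
                mul_le_mul_of_nonneg_left ihm (by positivity)
        have h3 : (10000:ℝ)^(k-(m+1)) * (10000:ℝ)^(k*m) ≤ (10000:ℝ)^(k*(m+1)) := by
          rw [← pow_add]
          refine pow_le_pow_right₀ (by norm_num) ?_
          have h4 : k - (m+1) ≤ k := Nat.sub_le _ _
          rw [Nat.mul_succ]
          omega
        refine max_le (h2.trans h3) ?_
        exact one_le_pow₀ (by norm_num)
    intro j hj
    have hx := (le_max_left _ _).trans ((hasc j hj).trans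
      (pow_le_pow_right₀ (by norm_num : (1:ℝ) ≤ 10000) (Nat.mul_le_mul_left k hj)))
    have hrw : a j = (a j / g j) * g j := (div_mul_cancel₀ _ (hgpos j).ne').symm
    rw [hrw]
    calc (a j / g j) * g j ≤ (10000:ℝ)^(k*k) * g j :=
          mul_le_mul_of_nonneg_right hx (hgpos j).le
      _ = (10000 : ℝ) ^ (k * k) * (a 0 ^ (1 - (j : ℝ) / k) * B ^ ((j : ℝ) / k)) := rfl
open Set MeasureTheory
open scoped RealInnerProductSpace ContDiff

noncomputable section
section GNwork

variable {n : ℕ} {f : ℝ → EuclideanSpace ℝ (Fin n)}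

private lemma GN_deriv_smooth (hf : ContDiff ℝ (⊤ : ℕ∞) f) : ContDiff ℝ ∞ (deriv f) :=
  (contDiff_infty_iff_deriv.mp hf).2

private lemma GN_open (hf : ContDiff ℝ (⊤ : ℕ∞) f) : IsOpen {x : ℝ | deriv f x ≠ 0} := by
  have hc : Continuous (deriv f) := (GN_deriv_smooth hf).continuous
  have : {x : ℝ | deriv f x ≠ 0} = deriv f ⁻¹' ({0}ᶜ) := by ext x; simp
  rw [this]
  exact isOpen_compl_singleton.preimage hc

private lemma GN_sDeriv_smooth (hf : ContDiff ℝ (⊤ : ℕ∞) f)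
    {g : ℝ → EuclideanSpace ℝ (Fin n)}
    (hg : ContDiffOn ℝ ∞ g {x : ℝ | deriv f x ≠ 0}) :
    ContDiffOn ℝ ∞ (sDeriv f g) {x : ℝ | deriv f x ≠ 0} := by
  have hO := GN_open hf
  have hdg : ContDiffOn ℝ ∞ (deriv g) {x : ℝ | deriv f x ≠ 0} :=
    hg.deriv_of_isOpen hO (le_of_eq rfl)
  have hdf : ContDiffOn ℝ ∞ (deriv f) {x : ℝ | deriv f x ≠ 0} :=
    (GN_deriv_smooth hf).contDiffOn
  have hnorm : ContDiffOn ℝ ∞ (fun x => ‖deriv f x‖) {x : ℝ | deriv f x ≠ 0} :=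
    hdf.norm ℝ fun x hx => hx
  have hinv : ContDiffOn ℝ ∞ (fun x => ‖deriv f x‖⁻¹) {x : ℝ | deriv f x ≠ 0} :=
    hnorm.inv fun x hx => norm_ne_zero_iff.2 hx
  exact hinv.smul hdg

private lemma GN_tau_smooth (hf : ContDiff ℝ (⊤ : ℕ∞) f) :
    ContDiffOn ℝ ∞ (tau f) {x : ℝ | deriv f x ≠ 0} :=
  GN_sDeriv_smooth hf hf.contDiffOn

private lemma GN_u_smooth (hf : ContDiff ℝ (⊤ : ℕ∞) f) (j : ℕ) :
    ContDiffOn ℝ ∞ (nablaSIter f j (kappa f)) {x : ℝ | deriv f x ≠ 0} := by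
  induction j with
  | zero => exact GN_sDeriv_smooth hf (GN_tau_smooth hf)
  | succ m ih =>
    have h1 := GN_sDeriv_smooth hf ih
    have htau := GN_tau_smooth hf
    have hinner : ContDiffOn ℝ ∞
        (fun x => ⟪sDeriv f (nablaSIter f m (kappa f)) x, tau f x⟫)
        {x : ℝ | deriv f x ≠ 0} := h1.inner ℝ htau
    exact h1.sub (hinner.smul htau)

private lemma GN_diffAt (hf : ContDiff ℝ (⊤ : ℕ∞) f)
    {g : ℝ → EuclideanSpace ℝ (Fin n)}
    (hg : ContDiffOn ℝ ∞ g {x : ℝ | deriv f x ≠ 0}) {x : ℝ} (hx : deriv f x ≠ 0) :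
    DifferentiableAt ℝ g x :=
  (hg.differentiableOn (by simp)).differentiableAt
    ((GN_open hf).mem_nhds hx)

private lemma GN_tau_inner {x : ℝ} (hx : deriv f x ≠ 0) : ⟪tau f x, tau f x⟫ = 1 := by
  have hn : ‖deriv f x‖ ≠ 0 := norm_ne_zero_iff.2 hx
  show ⟪‖deriv f x‖⁻¹ • deriv f x, ‖deriv f x‖⁻¹ • deriv f x⟫ = 1
  rw [real_inner_smul_left, real_inner_smul_right, real_inner_self_eq_norm_sq]
  field_simp

private lemma GN_deriv_eq {g : ℝ → EuclideanSpace ℝ (Fin n)} {x : ℝ}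
    (hx : deriv f x ≠ 0) : deriv g x = ‖deriv f x‖ • sDeriv f g x := by
  have hn : ‖deriv f x‖ ≠ 0 := norm_ne_zero_iff.2 hx
  show deriv g x = ‖deriv f x‖ • (‖deriv f x‖⁻¹ • deriv g x)
  rw [smul_smul, mul_inv_cancel₀ hn, one_smul]

private lemma GN_orth (hf : ContDiff ℝ (⊤ : ℕ∞) f) (j : ℕ) {x : ℝ}
    (hx : deriv f x ≠ 0) : ⟪nablaSIter f j (kappa f) x, tau f x⟫ = 0 := by
  cases j with
  | zero =>
    -- `⟪κ, τ⟫ = 0` since `|τ| ≡ 1` near x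
    have hdτ : DifferentiableAt ℝ (tau f) x := GN_diffAt hf (GN_tau_smooth hf) hx
    have hD : HasDerivAt (fun y => ⟪tau f y, tau f y⟫)
        (⟪tau f x, deriv (tau f) x⟫ + ⟪deriv (tau f) x, tau f x⟫) x :=
      HasDerivAt.inner ℝ hdτ.hasDerivAt hdτ.hasDerivAt
    have hconst : (fun y => ⟪tau f y, tau f y⟫) =ᶠ[nhds x] fun _ => (1 : ℝ) := by
      filter_upwards [(GN_open hf).mem_nhds hx] with y hy
      exact GN_tau_inner hy
    have hD0 : HasDerivAt (fun y => ⟪tau f y, tau f y⟫) 0 x :=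
      (hasDerivAt_const x (1 : ℝ)).congr_of_eventuallyEq hconst
    have hzero : ⟪tau f x, deriv (tau f) x⟫ + ⟪deriv (tau f) x, tau f x⟫ = 0 :=
      hD.unique hD0
    have h2 : ⟪deriv (tau f) x, tau f x⟫ = 0 := by
      rw [real_inner_comm] at hzero
      linarith
    show ⟪sDeriv f (tau f) x, tau f x⟫ = 0
    show ⟪‖deriv f x‖⁻¹ • deriv (tau f) x, tau f x⟫ = 0
    rw [real_inner_smul_left, h2, mul_zero]
  | succ m =>
    show ⟪nablaS f (nablaSIter f m (kappa f)) x, tau f x⟫ = 0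
    unfold nablaS
    rw [inner_sub_left, real_inner_smul_left, GN_tau_inner hx, mul_one, sub_self]

private lemma GN_inner_hasDeriv (hf : ContDiff ℝ (⊤ : ℕ∞) f) (j m : ℕ) {x : ℝ}
    (hx : deriv f x ≠ 0) :
    HasDerivAt (fun y => ⟪nablaSIter f j (kappa f) y, nablaSIter f m (kappa f) y⟫)
      (‖deriv f x‖ * (⟪nablaSIter f (j+1) (kappa f) x, nablaSIter f m (kappa f) x⟫
        + ⟪nablaSIter f j (kappa f) x, nablaSIter f (m+1) (kappa f) x⟫)) x := by
  have key : ∀ l : ℕ, ∀ w : EuclideanSpace ℝ (Fin n), ⟪w, tau f x⟫ = 0 →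
      ⟪deriv (nablaSIter f l (kappa f)) x, w⟫
        = ‖deriv f x‖ * ⟪nablaSIter f (l+1) (kappa f) x, w⟫ := by
    intro l w hw
    have hdecomp : sDeriv f (nablaSIter f l (kappa f)) x
        = nablaSIter f (l+1) (kappa f) x
          + ⟪sDeriv f (nablaSIter f l (kappa f)) x, tau f x⟫ • tau f x := by
      show _ = nablaS f (nablaSIter f l (kappa f)) x + _
      unfold nablaS
      abel
    have hw' : ⟪tau f x, w⟫ = 0 := by rw [real_inner_comm]; exact hw
    rw [GN_deriv_eq hx, real_inner_smul_left, hdecomp, inner_add_left,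
      real_inner_smul_left, hw']
    ring
  have hdj := (GN_diffAt hf (GN_u_smooth hf j) hx).hasDerivAt
  have hdm := (GN_diffAt hf (GN_u_smooth hf m) hx).hasDerivAt
  have hD := HasDerivAt.inner ℝ hdj hdm
  have e1 : ⟪nablaSIter f j (kappa f) x, deriv (nablaSIter f m (kappa f)) x⟫
      = ‖deriv f x‖ * ⟪nablaSIter f j (kappa f) x, nablaSIter f (m+1) (kappa f) x⟫ := by
    rw [real_inner_comm, key m _ (GN_orth hf j hx),
      real_inner_comm (nablaSIter f (m+1) (kappa f) x) (nablaSIter f j (kappa f) x)]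
  have e2 : ⟪deriv (nablaSIter f j (kappa f)) x, nablaSIter f m (kappa f) x⟫
      = ‖deriv f x‖ * ⟪nablaSIter f (j+1) (kappa f) x, nablaSIter f m (kappa f) x⟫ :=
    key j _ (GN_orth hf m hx)
  exact hD.congr_deriv (by rw [e1, e2]; ring)


private lemma GN_L_pos (hf : ContDiff ℝ (⊤ : ℕ∞) f)
    (hd : ∀ x ∈ Icc (0 : ℝ) 1, deriv f x ≠ 0) : 0 < curveLen f := by
  have hc : Continuous fun x => ‖deriv f x‖ := (GN_deriv_smooth hf).continuous.norm
  apply intervalIntegral.intervalIntegral_pos_of_pos_on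
  · exact hc.intervalIntegrable 0 1
  · intro x hx
    exact norm_pos_iff.2 (hd x (Ioo_subset_Icc_self hx))
  · norm_num

private lemma GN_ii {h : ℝ → ℝ} (hc : ContinuousOn h (Icc (0:ℝ) 1)) :
    IntervalIntegrable h MeasureTheory.volume 0 1 := by
  apply ContinuousOn.intervalIntegrable
  rwa [Set.uIcc_of_le (by norm_num : (0:ℝ) ≤ 1)]

private lemma GN_cont (hd : ∀ x ∈ Icc (0 : ℝ) 1, deriv f x ≠ 0)
    {g : ℝ → EuclideanSpace ℝ (Fin n)}
    (hg : ContDiffOn ℝ ∞ g {x : ℝ | deriv f x ≠ 0}) : ContinuousOn g (Icc (0:ℝ) 1) :=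
  hg.continuousOn.mono fun x hx => hd x hx

private lemma GN_u_cont (hf : ContDiff ℝ (⊤ : ℕ∞) f)
    (hd : ∀ x ∈ Icc (0 : ℝ) 1, deriv f x ≠ 0) (j : ℕ) :
    ContinuousOn (nablaSIter f j (kappa f)) (Icc (0:ℝ) 1) :=
  GN_cont hd (GN_u_smooth hf j)

private lemma GN_ftc (hf : ContDiff ℝ (⊤ : ℕ∞) f)
    (hd : ∀ x ∈ Icc (0 : ℝ) 1, deriv f x ≠ 0) (j m : ℕ) {a b : ℝ}
    (ha : a ∈ Icc (0:ℝ) 1) (hb : b ∈ Icc (0:ℝ) 1) :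
    ∫ t in a..b, ‖deriv f t‖ * (⟪nablaSIter f (j+1) (kappa f) t, nablaSIter f m (kappa f) t⟫
        + ⟪nablaSIter f j (kappa f) t, nablaSIter f (m+1) (kappa f) t⟫)
      = ⟪nablaSIter f j (kappa f) b, nablaSIter f m (kappa f) b⟫
        - ⟪nablaSIter f j (kappa f) a, nablaSIter f m (kappa f) a⟫ := by
  have hsub : Set.uIcc a b ⊆ Icc (0:ℝ) 1 := by
    rw [← Set.uIcc_of_le (by norm_num : (0:ℝ) ≤ 1)]
    exact Set.uIcc_subset_uIcc (by rwa [Set.uIcc_of_le (by norm_num : (0:ℝ) ≤ 1)])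
      (by rwa [Set.uIcc_of_le (by norm_num : (0:ℝ) ≤ 1)])
  apply intervalIntegral.integral_eq_sub_of_hasDerivAt
  · intro t ht
    exact GN_inner_hasDeriv hf j m (hd t (hsub ht))
  · apply ContinuousOn.intervalIntegrable
    have hIccsub : Set.uIcc a b ⊆ Set.uIcc (0:ℝ) 1 := by
      rwa [Set.uIcc_of_le (by norm_num : (0:ℝ) ≤ 1)]
    apply ContinuousOn.mono _ hIccsub
    rw [Set.uIcc_of_le (by norm_num : (0:ℝ) ≤ 1)]
    exact (((GN_deriv_smooth hf).continuous.norm).continuousOn).mul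
      (((GN_u_cont hf hd (j+1)).inner (GN_u_cont hf hd m)).add
        ((GN_u_cont hf hd j).inner (GN_u_cont hf hd (m+1))))

private lemma GN_agmon (hf : ContDiff ℝ (⊤ : ℕ∞) f)
    (hd : ∀ x ∈ Icc (0 : ℝ) 1, deriv f x ≠ 0) (j : ℕ) {x : ℝ} (hx : x ∈ Icc (0:ℝ) 1) :
    ‖nablaSIter f j (kappa f) x‖^2
      ≤ 2 * (∫ t in (0:ℝ)..1, ‖nablaSIter f j (kappa f) t‖
            * ‖nablaSIter f (j+1) (kappa f) t‖ * ‖deriv f t‖)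
        + (curveLen f)⁻¹ * ∫ t in (0:ℝ)..1, ‖nablaSIter f j (kappa f) t‖^2 * ‖deriv f t‖ := by
  set u : ℕ → ℝ → EuclideanSpace ℝ (Fin n) := fun j => nablaSIter f j (kappa f) with hu
  set v : ℝ → ℝ := fun t => ‖deriv f t‖ with hv
  have hvc : Continuous v := (GN_deriv_smooth hf).continuous.norm
  have hL := GN_L_pos hf hd
  -- integrability facts
  have hIq_int : IntervalIntegrable (fun t => ‖u j t‖^2 * v t) MeasureTheory.volume 0 1 :=
    GN_ii ((((GN_u_cont hf hd j).norm).pow 2).mul hvc.continuousOn)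
  have hCS_int : IntervalIntegrable (fun t => ‖u j t‖ * ‖u (j+1) t‖ * v t)
      MeasureTheory.volume 0 1 :=
    GN_ii ((((GN_u_cont hf hd j).norm).mul ((GN_u_cont hf hd (j+1)).norm)).mul hvc.continuousOn)
  -- minimum point
  obtain ⟨y, hy, hymin⟩ := isCompact_Icc.exists_isMinOn
    (⟨0, by norm_num⟩ : (Icc (0:ℝ) 1).Nonempty) ((GN_u_cont hf hd j).norm)
  have hymin' : ∀ z ∈ Icc (0:ℝ) 1, ‖u j y‖ ≤ ‖u j z‖ := fun z hz => hymin hz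
  -- min value bound
  have hmin2 : ‖u j y‖^2 ≤ (curveLen f)⁻¹ * ∫ t in (0:ℝ)..1, ‖u j t‖^2 * v t := by
    have h1 : ∫ t in (0:ℝ)..1, ‖u j y‖^2 * v t ≤ ∫ t in (0:ℝ)..1, ‖u j t‖^2 * v t := by
      apply intervalIntegral.integral_mono_on (by norm_num)
        (GN_ii ((continuousOn_const.pow 2).mul hvc.continuousOn)) hIq_int
      intro t ht
      exact mul_le_mul_of_nonneg_right
        (pow_le_pow_left₀ (norm_nonneg _) (hymin' t ht) 2) (norm_nonneg _)
    have h2 : ∫ t in (0:ℝ)..1, ‖u j y‖^2 * v t = ‖u j y‖^2 * curveLen f := by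
      rw [intervalIntegral.integral_const_mul]
      rfl
    rw [h2] at h1
    rw [inv_mul_eq_div, le_div_iff₀ hL]
    exact h1
  -- pointwise bound on the derivative integrand
  have hptw : ∀ t ∈ Icc (0:ℝ) 1,
      |v t * (⟪u (j+1) t, u j t⟫ + ⟪u j t, u (j+1) t⟫)|
        ≤ 2 * (‖u j t‖ * ‖u (j+1) t‖ * v t) := by
    intro t _
    have h1 := abs_real_inner_le_norm (u (j+1) t) (u j t)
    have h2 := abs_real_inner_le_norm (u j t) (u (j+1) t)
    have h3 : |⟪u (j+1) t, u j t⟫ + ⟪u j t, u (j+1) t⟫|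
        ≤ 2 * (‖u j t‖ * ‖u (j+1) t‖) := by
      calc |⟪u (j+1) t, u j t⟫ + ⟪u j t, u (j+1) t⟫|
          ≤ |⟪u (j+1) t, u j t⟫| + |⟪u j t, u (j+1) t⟫| := abs_add_le _ _
        _ ≤ 2 * (‖u j t‖ * ‖u (j+1) t‖) := by nlinarith [h1, h2]
    calc |v t * (⟪u (j+1) t, u j t⟫ + ⟪u j t, u (j+1) t⟫)|
        = v t * |⟪u (j+1) t, u j t⟫ + ⟪u j t, u (j+1) t⟫| := by
          rw [abs_mul, abs_of_nonneg (norm_nonneg _)]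
      _ ≤ v t * (2 * (‖u j t‖ * ‖u (j+1) t‖)) :=
          mul_le_mul_of_nonneg_left h3 (norm_nonneg _)
      _ = 2 * (‖u j t‖ * ‖u (j+1) t‖ * v t) := by ring
  have hbnd_nonneg : ∀ t, (0:ℝ) ≤ ‖u j t‖ * ‖u (j+1) t‖ * v t := fun t => by positivity
  -- the oriented-integral bound
  have hkey : ⟪u j x, u j x⟫ - ⟪u j y, u j y⟫
      ≤ 2 * ∫ t in (0:ℝ)..1, ‖u j t‖ * ‖u (j+1) t‖ * v t := by
    have hsub1 : ∀ {c d : ℝ}, c ∈ Icc (0:ℝ) 1 → d ∈ Icc (0:ℝ) 1 → c ≤ d →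
        (∫ t in c..d, v t * (⟪u (j+1) t, u j t⟫ + ⟪u j t, u (j+1) t⟫))
          ≤ 2 * ∫ t in (0:ℝ)..1, ‖u j t‖ * ‖u (j+1) t‖ * v t ∧
        -(∫ t in c..d, v t * (⟪u (j+1) t, u j t⟫ + ⟪u j t, u (j+1) t⟫))
          ≤ 2 * ∫ t in (0:ℝ)..1, ‖u j t‖ * ‖u (j+1) t‖ * v t := by
      intro c d hc hdd hcd
      have hIcc : Icc c d ⊆ Icc (0:ℝ) 1 := Icc_subset_Icc hc.1 hdd.2
      have hcont : ContinuousOn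
          (fun t => v t * (⟪u (j+1) t, u j t⟫ + ⟪u j t, u (j+1) t⟫)) (Icc (0:ℝ) 1) :=
        (hvc.continuousOn).mul (((GN_u_cont hf hd (j+1)).inner (GN_u_cont hf hd j)).add
          ((GN_u_cont hf hd j).inner (GN_u_cont hf hd (j+1))))
      have hint1 : IntervalIntegrable
          (fun t => v t * (⟪u (j+1) t, u j t⟫ + ⟪u j t, u (j+1) t⟫))
          MeasureTheory.volume c d :=
        (GN_ii hcont).mono_set (by rw [Set.uIcc_of_le hcd,
          Set.uIcc_of_le (by norm_num : (0:ℝ) ≤ 1)]; exact hIcc)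
      have hint2 : IntervalIntegrable (fun t => 2 * (‖u j t‖ * ‖u (j+1) t‖ * v t))
          MeasureTheory.volume c d := by
        have h2' : IntervalIntegrable (fun t => 2 * (‖u j t‖ * ‖u (j+1) t‖ * v t))
            MeasureTheory.volume 0 1 := GN_ii (continuousOn_const.mul
          ((((GN_u_cont hf hd j).norm).mul ((GN_u_cont hf hd (j+1)).norm)).mul
            hvc.continuousOn))
        exact h2'.mono_set (by rw [Set.uIcc_of_le hcd,
          Set.uIcc_of_le (by norm_num : (0:ℝ) ≤ 1)]; exact hIcc)
      have hupper : (∫ t in c..d, v t * (⟪u (j+1) t, u j t⟫ + ⟪u j t, u (j+1) t⟫))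
          ≤ ∫ t in c..d, 2 * (‖u j t‖ * ‖u (j+1) t‖ * v t) := by
        apply intervalIntegral.integral_mono_on hcd hint1 hint2
        intro t ht
        exact le_trans (le_abs_self _) (hptw t (hIcc ht))
      have hlower : -(∫ t in c..d, v t * (⟪u (j+1) t, u j t⟫ + ⟪u j t, u (j+1) t⟫))
          ≤ ∫ t in c..d, 2 * (‖u j t‖ * ‖u (j+1) t‖ * v t) := by
        rw [← intervalIntegral.integral_neg]
        apply intervalIntegral.integral_mono_on hcd hint1.neg hint2
        intro t ht
        exact le_trans (neg_le_abs _) (hptw t (hIcc ht))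
      have hext : (∫ t in c..d, 2 * (‖u j t‖ * ‖u (j+1) t‖ * v t))
          ≤ 2 * ∫ t in (0:ℝ)..1, ‖u j t‖ * ‖u (j+1) t‖ * v t := by
        rw [← intervalIntegral.integral_const_mul]
        apply intervalIntegral.integral_mono_interval hc.1 hcd hdd.2
        · exact Filter.Eventually.of_forall fun t => by positivity
        · exact (GN_ii (continuousOn_const.mul
            ((((GN_u_cont hf hd j).norm).mul ((GN_u_cont hf hd (j+1)).norm)).mul
              hvc.continuousOn)))
      exact ⟨hupper.trans hext, hlower.trans hext⟩
    rcases le_total y x with h | h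
    · have hftc := GN_ftc hf hd j j hy hx
      rw [← hftc]
      exact (hsub1 hy hx h).1
    · have hftc := GN_ftc hf hd j j hx hy
      have : ⟪u j x, u j x⟫ - ⟪u j y, u j y⟫
          = -(∫ t in x..y, v t * (⟪u (j+1) t, u j t⟫ + ⟪u j t, u (j+1) t⟫)) := by
        rw [hftc]; ring
      rw [this]
      exact (hsub1 hx hy h).2
  have hfin : ‖u j x‖^2 ≤ ‖u j y‖^2
      + 2 * ∫ t in (0:ℝ)..1, ‖u j t‖ * ‖u (j+1) t‖ * v t := by
    have e1 : ⟪u j x, u j x⟫ = ‖u j x‖^2 := real_inner_self_eq_norm_sq _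
    have e2 : ⟪u j y, u j y⟫ = ‖u j y‖^2 := real_inner_self_eq_norm_sq _
    rw [e1, e2] at hkey
    linarith
  linarith [hmin2]

private lemma GN_CS {P Q : ℝ → ℝ} (hP : ContinuousOn P (Icc (0:ℝ) 1))
    (hQ : ContinuousOn Q (Icc (0:ℝ) 1))
    (hPnn : ∀ x ∈ Icc (0:ℝ) 1, 0 ≤ P x) (hQnn : ∀ x ∈ Icc (0:ℝ) 1, 0 ≤ Q x) :
    (∫ x in (0:ℝ)..1, P x * Q x)
      ≤ Real.sqrt (∫ x in (0:ℝ)..1, P x ^ 2) * Real.sqrt (∫ x in (0:ℝ)..1, Q x ^ 2) := by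
  set X := ∫ x in (0:ℝ)..1, P x * Q x with hXdef
  set A := ∫ x in (0:ℝ)..1, P x ^ 2 with hAdef
  set Bq := ∫ x in (0:ℝ)..1, Q x ^ 2 with hBdef
  have hA : 0 ≤ A := intervalIntegral.integral_nonneg (by norm_num) fun t ht => sq_nonneg _
  have hB : 0 ≤ Bq := intervalIntegral.integral_nonneg (by norm_num) fun t ht => sq_nonneg _
  have ht : ∀ t : ℝ, 0 < t → X ≤ (t * A + t⁻¹ * Bq) / 2 := by
    intro t ht0
    have hint1 : IntervalIntegrable (fun x => P x * Q x) MeasureTheory.volume 0 1 :=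
      GN_ii (hP.mul hQ)
    have hint2 : IntervalIntegrable (fun x => (t * P x ^ 2 + t⁻¹ * Q x ^ 2) / 2)
        MeasureTheory.volume 0 1 :=
      GN_ii (((continuousOn_const.mul (hP.pow 2)).add
        (continuousOn_const.mul (hQ.pow 2))).div_const 2)
    have hmono := intervalIntegral.integral_mono_on (by norm_num) hint1 hint2 ?_
    · have hsplit : ∫ x in (0:ℝ)..1, (t * P x ^ 2 + t⁻¹ * Q x ^ 2) / 2
          = (t * A + t⁻¹ * Bq) / 2 := by
        rw [intervalIntegral.integral_div, intervalIntegral.integral_add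
          (f := fun x => t * P x ^ 2) (g := fun x => t⁻¹ * Q x ^ 2)
          ((GN_ii (hP.pow 2)).const_mul t) ((GN_ii (hQ.pow 2)).const_mul t⁻¹),
          intervalIntegral.integral_const_mul, intervalIntegral.integral_const_mul]
      rw [hsplit] at hmono
      exact hmono
    · intro x hx
      have h1 : 0 ≤ t⁻¹ * (t * P x - Q x)^2 := by positivity
      have h2 : t * t⁻¹ = 1 := mul_inv_cancel₀ ht0.ne'
      rw [le_div_iff₀ (by norm_num : (0:ℝ) < 2)]
      nlinarith [h1, h2, sq_nonneg (P x), sq_nonneg (Q x), mul_pos ht0 ht0]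
  rcases eq_or_lt_of_le hA with hA0 | hA0
  · have hX0 : X ≤ 0 := by
      apply GN_le_of_forall_eps (show (0:ℝ) ≤ Bq / 2 by positivity)
      intro ε he0 he1
      have := ht ε⁻¹ (by positivity)
      rw [← hA0, inv_inv] at this
      calc X ≤ (ε⁻¹ * 0 + ε * Bq) / 2 := this
        _ = Bq / 2 * ε := by ring
    calc X ≤ 0 := hX0
      _ ≤ _ := by positivity
  · rcases eq_or_lt_of_le hB with hB0 | hB0
    · have hX0 : X ≤ 0 := by
        apply GN_le_of_forall_eps (show (0:ℝ) ≤ A / 2 by positivity)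
        intro ε he0 he1
        have := ht ε he0
        rw [← hB0] at this
        calc X ≤ (ε * A + ε⁻¹ * 0) / 2 := this
          _ = A / 2 * ε := by ring
      calc X ≤ 0 := hX0
        _ ≤ _ := by positivity
    · set sa := Real.sqrt A with hsadef
      set sb := Real.sqrt Bq with hsbdef
      have hsa : 0 < sa := Real.sqrt_pos.2 hA0
      have hsb : 0 < sb := Real.sqrt_pos.2 hB0
      have hA' : A = sa * sa := (Real.mul_self_sqrt hA).symm
      have hB' : Bq = sb * sb := (Real.mul_self_sqrt hB).symm
      have e : (sb / sa * A + (sb / sa)⁻¹ * Bq) / 2 = sa * sb := by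
        rw [hA', hB']
        field_simp
        ring
      calc X ≤ (sb / sa * A + (sb / sa)⁻¹ * Bq) / 2 := ht _ (by positivity)
        _ = sa * sb := e

private lemma GN_ibp (hf : ContDiff ℝ (⊤ : ℕ∞) f)
    (hd : ∀ x ∈ Icc (0 : ℝ) 1, deriv f x ≠ 0) (j : ℕ) (hj : 1 ≤ j) :
    (∫ t in (0:ℝ)..1, ‖nablaSIter f j (kappa f) t‖^2 * ‖deriv f t‖)
      ≤ ‖nablaSIter f (j-1) (kappa f) 1‖ * ‖nablaSIter f j (kappa f) 1‖
        + ‖nablaSIter f (j-1) (kappa f) 0‖ * ‖nablaSIter f j (kappa f) 0‖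
        + ∫ t in (0:ℝ)..1, ‖nablaSIter f (j-1) (kappa f) t‖
            * ‖nablaSIter f (j+1) (kappa f) t‖ * ‖deriv f t‖ := by
  set u : ℕ → ℝ → EuclideanSpace ℝ (Fin n) := fun j => nablaSIter f j (kappa f) with hu
  set v : ℝ → ℝ := fun t => ‖deriv f t‖ with hv
  have hvc : Continuous v := (GN_deriv_smooth hf).continuous.norm
  have h0 : (0:ℝ) ∈ Icc (0:ℝ) 1 := by norm_num
  have h1 : (1:ℝ) ∈ Icc (0:ℝ) 1 := by norm_num
  have hftc := GN_ftc hf hd (j-1) j h0 h1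
  rw [Nat.sub_add_cancel hj] at hftc
  have hintA : IntervalIntegrable (fun t => v t * ⟪u j t, u j t⟫) MeasureTheory.volume 0 1 :=
    GN_ii ((hvc.continuousOn).mul ((GN_u_cont hf hd j).inner (GN_u_cont hf hd j)))
  have hintB : IntervalIntegrable (fun t => v t * ⟪u (j-1) t, u (j+1) t⟫)
      MeasureTheory.volume 0 1 :=
    GN_ii ((hvc.continuousOn).mul ((GN_u_cont hf hd (j-1)).inner (GN_u_cont hf hd (j+1))))
  have hsplit : (∫ t in (0:ℝ)..1, v t * (⟪u j t, u j t⟫ + ⟪u (j-1) t, u (j+1) t⟫))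
      = (∫ t in (0:ℝ)..1, v t * ⟪u j t, u j t⟫)
        + ∫ t in (0:ℝ)..1, v t * ⟪u (j-1) t, u (j+1) t⟫ := by
    rw [← intervalIntegral.integral_add hintA hintB]
    congr 1
    funext t
    ring
  rw [hsplit] at hftc
  have e1 : (∫ t in (0:ℝ)..1, v t * ⟪u j t, u j t⟫)
      = ∫ t in (0:ℝ)..1, ‖u j t‖^2 * v t := by
    congr 1
    funext t
    rw [real_inner_self_eq_norm_sq]
    ring
  rw [e1] at hftc
  -- bound the inner-product integral
  have habs : |∫ t in (0:ℝ)..1, v t * ⟪u (j-1) t, u (j+1) t⟫|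
      ≤ ∫ t in (0:ℝ)..1, ‖u (j-1) t‖ * ‖u (j+1) t‖ * v t := by
    calc |∫ t in (0:ℝ)..1, v t * ⟪u (j-1) t, u (j+1) t⟫|
        ≤ ∫ t in (0:ℝ)..1, |v t * ⟪u (j-1) t, u (j+1) t⟫| :=
          intervalIntegral.abs_integral_le_integral_abs (by norm_num)
      _ ≤ ∫ t in (0:ℝ)..1, ‖u (j-1) t‖ * ‖u (j+1) t‖ * v t := by
          apply intervalIntegral.integral_mono_on (by norm_num) hintB.abs
            (GN_ii ((((GN_u_cont hf hd (j-1)).norm).mul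
              ((GN_u_cont hf hd (j+1)).norm)).mul hvc.continuousOn))
          intro t ht
          calc |v t * ⟪u (j-1) t, u (j+1) t⟫|
              = v t * |⟪u (j-1) t, u (j+1) t⟫| := by
                rw [abs_mul, abs_of_nonneg (norm_nonneg _)]
            _ ≤ v t * (‖u (j-1) t‖ * ‖u (j+1) t‖) :=
                mul_le_mul_of_nonneg_left (abs_real_inner_le_norm _ _) (norm_nonneg _)
            _ = ‖u (j-1) t‖ * ‖u (j+1) t‖ * v t := by ring
  have hb1 : ⟪u (j-1) 1, u j 1⟫ ≤ ‖u (j-1) 1‖ * ‖u j 1‖ := real_inner_le_norm _ _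
  have hb0 : -⟪u (j-1) 0, u j 0⟫ ≤ ‖u (j-1) 0‖ * ‖u j 0‖ := by
    have := abs_real_inner_le_norm (u (j-1) 0) (u j 0)
    have h2 := neg_le_abs (⟪u (j-1) 0, u j 0⟫)
    linarith
  have h3 := neg_le_abs (∫ t in (0:ℝ)..1, v t * ⟪u (j-1) t, u (j+1) t⟫)
  linarith

private lemma GN_CS_w {P Q w : ℝ → ℝ} (hP : ContinuousOn P (Icc (0:ℝ) 1))
    (hQ : ContinuousOn Q (Icc (0:ℝ) 1)) (hw : ContinuousOn w (Icc (0:ℝ) 1))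
    (hPnn : ∀ x ∈ Icc (0:ℝ) 1, 0 ≤ P x) (hQnn : ∀ x ∈ Icc (0:ℝ) 1, 0 ≤ Q x)
    (hwnn : ∀ x ∈ Icc (0:ℝ) 1, 0 ≤ w x) :
    (∫ x in (0:ℝ)..1, P x * Q x * w x)
      ≤ Real.sqrt (∫ x in (0:ℝ)..1, P x ^ 2 * w x)
        * Real.sqrt (∫ x in (0:ℝ)..1, Q x ^ 2 * w x) := by
  set X := ∫ x in (0:ℝ)..1, P x * Q x * w x with hXdef
  set A := ∫ x in (0:ℝ)..1, P x ^ 2 * w x with hAdef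
  set Bq := ∫ x in (0:ℝ)..1, Q x ^ 2 * w x with hBdef
  have hA : 0 ≤ A := intervalIntegral.integral_nonneg (by norm_num)
    fun t ht => mul_nonneg (sq_nonneg _) (hwnn t ht)
  have hB : 0 ≤ Bq := intervalIntegral.integral_nonneg (by norm_num)
    fun t ht => mul_nonneg (sq_nonneg _) (hwnn t ht)
  have ht : ∀ t : ℝ, 0 < t → X ≤ (t * A + t⁻¹ * Bq) / 2 := by
    intro t ht0
    have hint1 : IntervalIntegrable (fun x => P x * Q x * w x) MeasureTheory.volume 0 1 :=
      GN_ii ((hP.mul hQ).mul hw)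
    have hint2 : IntervalIntegrable (fun x => (t * (P x ^ 2 * w x) + t⁻¹ * (Q x ^ 2 * w x)) / 2)
        MeasureTheory.volume 0 1 :=
      GN_ii (((continuousOn_const.mul ((hP.pow 2).mul hw)).add
        (continuousOn_const.mul ((hQ.pow 2).mul hw))).div_const 2)
    have hmono := intervalIntegral.integral_mono_on (by norm_num) hint1 hint2 ?_
    · have hsplit : ∫ x in (0:ℝ)..1, (t * (P x ^ 2 * w x) + t⁻¹ * (Q x ^ 2 * w x)) / 2
          = (t * A + t⁻¹ * Bq) / 2 := by
        rw [intervalIntegral.integral_div, intervalIntegral.integral_add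
          (f := fun x => t * (P x ^ 2 * w x)) (g := fun x => t⁻¹ * (Q x ^ 2 * w x))
          ((GN_ii ((hP.pow 2).mul hw)).const_mul t)
          ((GN_ii ((hQ.pow 2).mul hw)).const_mul t⁻¹),
          intervalIntegral.integral_const_mul, intervalIntegral.integral_const_mul]
      rw [hsplit] at hmono
      exact hmono
    · intro x hx
      have h2 : t * t⁻¹ = 1 := mul_inv_cancel₀ ht0.ne'
      have key : P x * Q x * w x * 2 * t ≤ (t * (P x ^ 2 * w x) + t⁻¹ * (Q x ^ 2 * w x)) * t := by
        have e : (t * (P x ^ 2 * w x) + t⁻¹ * (Q x ^ 2 * w x)) * t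
            = t ^ 2 * (P x ^ 2 * w x) + (t * t⁻¹) * (Q x ^ 2 * w x) := by ring
        rw [e, h2, one_mul]
        nlinarith [mul_nonneg (hwnn x hx) (sq_nonneg (t * P x - Q x))]
      have key2 : P x * Q x * w x * 2 ≤ t * (P x ^ 2 * w x) + t⁻¹ * (Q x ^ 2 * w x) :=
        le_of_mul_le_mul_right key ht0
      rw [le_div_iff₀ (by norm_num : (0:ℝ) < 2)]
      linarith
  rcases eq_or_lt_of_le hA with hA0 | hA0
  · have hX0 : X ≤ 0 := by
      apply GN_le_of_forall_eps (show (0:ℝ) ≤ Bq / 2 by positivity)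
      intro ε he0 he1
      have := ht ε⁻¹ (by positivity)
      rw [← hA0, inv_inv] at this
      calc X ≤ (ε⁻¹ * 0 + ε * Bq) / 2 := this
        _ = Bq / 2 * ε := by ring
    calc X ≤ 0 := hX0
      _ ≤ _ := by positivity
  · rcases eq_or_lt_of_le hB with hB0 | hB0
    · have hX0 : X ≤ 0 := by
        apply GN_le_of_forall_eps (show (0:ℝ) ≤ A / 2 by positivity)
        intro ε he0 he1
        have := ht ε he0
        rw [← hB0] at this
        calc X ≤ (ε * A + ε⁻¹ * 0) / 2 := this
          _ = A / 2 * ε := by ring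
      calc X ≤ 0 := hX0
        _ ≤ _ := by positivity
    · set sa := Real.sqrt A with hsadef
      set sb := Real.sqrt Bq with hsbdef
      have hsa : 0 < sa := Real.sqrt_pos.2 hA0
      have hsb : 0 < sb := Real.sqrt_pos.2 hB0
      have hA' : A = sa * sa := (Real.mul_self_sqrt hA).symm
      have hB' : Bq = sb * sb := (Real.mul_self_sqrt hB).symm
      have e : (sb / sa * A + (sb / sa)⁻¹ * Bq) / 2 = sa * sb := by
        nth_rewrite 1 [hA']
        nth_rewrite 1 [hB']
        field_simp
        ring
      calc X ≤ (sb / sa * A + (sb / sa)⁻¹ * Bq) / 2 := ht _ (by positivity)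
        _ = sa * sb := e

private lemma GN_CS_uv (hf : ContDiff ℝ (⊤ : ℕ∞) f)
    (hd : ∀ x ∈ Icc (0 : ℝ) 1, deriv f x ≠ 0) (l m : ℕ) :
    (∫ t in (0:ℝ)..1, ‖nablaSIter f l (kappa f) t‖ * ‖nablaSIter f m (kappa f) t‖
        * ‖deriv f t‖)
      ≤ Real.sqrt (∫ t in (0:ℝ)..1, ‖nablaSIter f l (kappa f) t‖^2 * ‖deriv f t‖)
        * Real.sqrt (∫ t in (0:ℝ)..1, ‖nablaSIter f m (kappa f) t‖^2 * ‖deriv f t‖) :=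
  GN_CS_w ((GN_u_cont hf hd l).norm) ((GN_u_cont hf hd m).norm)
    ((GN_deriv_smooth hf).continuous.norm).continuousOn
    (fun x _ => norm_nonneg _) (fun x _ => norm_nonneg _) (fun x _ => norm_nonneg _)

private lemma GN_knorm_nonneg (f : ℝ → EuclideanSpace ℝ (Fin n)) (j : ℕ) (p : ℝ) :
    0 ≤ knorm f j p := by
  unfold knorm
  apply mul_nonneg
  · apply Real.rpow_nonneg
    exact intervalIntegral.integral_nonneg (by norm_num) fun t ht => norm_nonneg _
  · apply Real.rpow_nonneg
    apply intervalIntegral.integral_nonneg (by norm_num)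
    intro t ht
    positivity

end GNwork

set_option maxHeartbeats 2000000

/-- Gagliardo–Nirenberg type interpolation inequality:
`‖∇ₛⁱκ‖_p ≤ C ‖κ‖₂^{1−α} ‖κ‖_{k,2}^α` with `α = (i + ½ − 1/p)/k`, `C = C(n,k,p)`. -/
theorem interpolation_inequality (n k : ℕ) (hn : 2 ≤ n) (p : ℝ) (hp : 2 ≤ p)
    (i : ℕ) (hik : i < k) :
    ∃ C : ℝ, 0 < C ∧
      ∀ f : ℝ → EuclideanSpace ℝ (Fin n),
        ContDiff ℝ (⊤ : ℕ∞) f → (∀ x ∈ Icc (0 : ℝ) 1, deriv f x ≠ 0) →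
        knorm f i p
          ≤ C * knorm f 0 2 ^ (1 - ((i : ℝ) + 1 / 2 - 1 / p) / k)
              * knormSum f k 2 ^ (((i : ℝ) + 1 / 2 - 1 / p) / k) := by
  have hk : 0 < k := Nat.pos_of_ne_zero (by omega)
  have hkR : (0:ℝ) < (k:ℝ) := Nat.cast_pos.2 hk
  have hkR' : (k:ℝ) ≠ 0 := ne_of_gt hkR
  have hp0 : (0:ℝ) < p := by linarith
  have hp0' : p ≠ 0 := ne_of_gt hp0
  set αe : ℝ := ((i : ℝ) + 1 / 2 - 1 / p) / k with hαdef
  set Ck : ℝ := (10000:ℝ)^(k*k) with hCkdef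
  have hCk0 : 0 < Ck := by positivity
  have hCk1 : (1:ℝ) ≤ Ck := one_le_pow₀ (by norm_num)
  refine ⟨3 * Ck, by positivity, ?_⟩
  intro f hf hd
  set L := curveLen f with hLdef
  have hL : 0 < L := GN_L_pos hf hd
  set u : ℕ → ℝ → EuclideanSpace ℝ (Fin n) := fun j => nablaSIter f j (kappa f) with hudef
  set v : ℝ → ℝ := fun t => ‖deriv f t‖ with hvdef
  have hvc : Continuous v := (GN_deriv_smooth hf).continuous.norm
  set Iq : ℕ → ℝ := fun j => ∫ t in (0:ℝ)..1, ‖u j t‖^2 * v t with hIqdef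
  set CSq : ℕ → ℝ := fun j => ∫ t in (0:ℝ)..1, ‖u j t‖ * ‖u (j+1) t‖ * v t with hCSdef
  set R : ℕ → ℝ := fun j => 2 * CSq j + L⁻¹ * Iq j with hRdef
  set A : ℕ → ℝ := fun j => knorm f j 2 with hAdef
  set S : ℕ → ℝ := fun j => L ^ ((j:ℝ)+1) * Real.sqrt (R j) with hSdef
  have hIq_nonneg : ∀ j, 0 ≤ Iq j := fun j =>
    intervalIntegral.integral_nonneg (by norm_num) fun t ht => by positivity
  have hCS_nonneg : ∀ j, 0 ≤ CSq j := fun j =>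
    intervalIntegral.integral_nonneg (by norm_num) fun t ht => by positivity
  have hR_nonneg : ∀ j, 0 ≤ R j := fun j =>
    add_nonneg (mul_nonneg (by norm_num) (hCS_nonneg j))
      (mul_nonneg (inv_nonneg.2 hL.le) (hIq_nonneg j))
  have hA_nonneg : ∀ j, 0 ≤ A j := fun j => GN_knorm_nonneg f j 2
  have hS_nonneg : ∀ j, 0 ≤ S j := fun j =>
    mul_nonneg (Real.rpow_nonneg hL.le _) (Real.sqrt_nonneg _)
  have cast1 : ∀ j : ℕ, (((j+1:ℕ)):ℝ) = (j:ℝ)+1 := fun j => by push_cast; ring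
  -- knorm in product form
  have hA_eq : ∀ j : ℕ, A j = L ^ ((j:ℝ) + 1/2) * Real.sqrt (Iq j) := by
    intro j
    show knorm f j 2 = _
    unfold knorm
    have e1 : (fun x => ‖nablaSIter f j (kappa f) x‖ ^ (2:ℝ) * ‖deriv f x‖)
        = fun x => ‖u j x‖^2 * v x := by
      funext x
      rw [show (2:ℝ) = ((2:ℕ):ℝ) by norm_num, Real.rpow_natCast]
    rw [show ((j:ℝ) + 1 - 1/(2:ℝ)) = (j:ℝ) + 1/2 by ring]
    rw [show (∫ x in (0:ℝ)..1, ‖nablaSIter f j (kappa f) x‖ ^ (2:ℝ) * ‖deriv f x‖)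
        = Iq j from congrArg (fun g => ∫ x in (0:ℝ)..1, g x) e1]
    rw [← Real.sqrt_eq_rpow]
  -- scaled Agmon inequality
  have hAg : ∀ j : ℕ, S j ^ 2 ≤ 2 * A j * A (j+1) + A j ^ 2 := by
    intro j
    have hcs : CSq j ≤ Real.sqrt (Iq j) * Real.sqrt (Iq (j+1)) := GN_CS_uv hf hd j (j+1)
    have key : S j^2 = (L^((j:ℝ)+1))^2 * R j := by
      simp only [hSdef]
      rw [mul_pow, Real.sq_sqrt (hR_nonneg j)]
    have hRle : R j ≤ 2*(Real.sqrt (Iq j) * Real.sqrt (Iq (j+1))) + L⁻¹ * Iq j := by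
      simp only [hRdef]
      linarith
    have E1 : (L^((j:ℝ)+1))^2 = L^((j:ℝ)+1/2) * L^(((j:ℝ)+1)+1/2) := by
      rw [← Real.rpow_natCast (L^((j:ℝ)+1)) 2, ← Real.rpow_mul hL.le, ← Real.rpow_add hL]
      congr 1
      push_cast
      ring
    have E2 : (L^((j:ℝ)+1))^2 * L⁻¹ = (L^((j:ℝ)+1/2))^2 := by
      rw [← Real.rpow_neg_one L, ← Real.rpow_natCast (L^((j:ℝ)+1)) 2,
        ← Real.rpow_mul hL.le, ← Real.rpow_natCast (L^((j:ℝ)+1/2)) 2,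
        ← Real.rpow_mul hL.le, ← Real.rpow_add hL]
      congr 1
      push_cast
      ring
    calc S j^2 = (L^((j:ℝ)+1))^2 * R j := key
      _ ≤ (L^((j:ℝ)+1))^2 * (2*(Real.sqrt (Iq j) * Real.sqrt (Iq (j+1))) + L⁻¹ * Iq j) :=
          mul_le_mul_of_nonneg_left hRle (by positivity)
      _ = 2 * A j * A (j+1) + A j ^ 2 := by
          rw [hA_eq j, hA_eq (j+1), cast1 j]
          have E3 : (L^((j:ℝ)+1/2) * Real.sqrt (Iq j))^2
              = (L^((j:ℝ)+1/2))^2 * Iq j := by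
            rw [mul_pow, Real.sq_sqrt (hIq_nonneg j)]
          calc (L^((j:ℝ)+1))^2 * (2*(Real.sqrt (Iq j) * Real.sqrt (Iq (j+1))) + L⁻¹ * Iq j)
              = 2 * ((L^((j:ℝ)+1))^2 * (Real.sqrt (Iq j) * Real.sqrt (Iq (j+1))))
                + ((L^((j:ℝ)+1))^2 * L⁻¹) * Iq j := by ring
            _ = 2 * (L^((j:ℝ)+1/2) * Real.sqrt (Iq j))
                  * (L^(((j:ℝ)+1)+1/2) * Real.sqrt (Iq (j+1)))
                + (L^((j:ℝ)+1/2) * Real.sqrt (Iq j))^2 := by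
                rw [E2, E1, E3]
                ring
  -- scaled IBP inequality
  have hIBPle : ∀ j : ℕ, 1 ≤ j → A j^2 ≤ 2*S (j-1)*S j + A (j-1)*A (j+1) := by
    intro j hj1
    have hibp := GN_ibp hf hd j hj1
    have hb : ∀ (l : ℕ) (e : ℝ), e ∈ Icc (0:ℝ) 1 → ‖u l e‖ ≤ Real.sqrt (R l) := by
      intro l e he
      have h2 : ‖u l e‖^2 ≤ R l := GN_agmon hf hd l he
      calc ‖u l e‖ = Real.sqrt (‖u l e‖^2) := (Real.sqrt_sq (norm_nonneg _)).symm
        _ ≤ Real.sqrt (R l) := Real.sqrt_le_sqrt h2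
    have hcs2 : (∫ t in (0:ℝ)..1, ‖u (j-1) t‖*‖u (j+1) t‖*v t)
        ≤ Real.sqrt (Iq (j-1)) * Real.sqrt (Iq (j+1)) := GN_CS_uv hf hd (j-1) (j+1)
    have hm1 : ‖u (j-1) 1‖ * ‖u j 1‖ ≤ Real.sqrt (R (j-1)) * Real.sqrt (R j) :=
      mul_le_mul (hb (j-1) 1 (by norm_num)) (hb j 1 (by norm_num))
        (norm_nonneg _) (Real.sqrt_nonneg _)
    have hm0 : ‖u (j-1) 0‖ * ‖u j 0‖ ≤ Real.sqrt (R (j-1)) * Real.sqrt (R j) :=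
      mul_le_mul (hb (j-1) 0 (by norm_num)) (hb j 0 (by norm_num))
        (norm_nonneg _) (Real.sqrt_nonneg _)
    have hstep : Iq j ≤ 2*(Real.sqrt (R (j-1)) * Real.sqrt (R j))
        + Real.sqrt (Iq (j-1)) * Real.sqrt (Iq (j+1)) := by
      have := hibp
      linarith
    have hcast : ((j-1:ℕ):ℝ) = (j:ℝ) - 1 := by
      rw [Nat.cast_sub hj1]
      norm_num
    have E4 : (L^((j:ℝ)+1/2))^2 = (L^(((j:ℝ)-1)+1)) * L^((j:ℝ)+1) := by
      rw [← Real.rpow_natCast (L^((j:ℝ)+1/2)) 2, ← Real.rpow_mul hL.le, ← Real.rpow_add hL]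
      congr 1
      push_cast
      ring
    have E5 : (L^((j:ℝ)+1/2))^2 = L^(((j:ℝ)-1)+1/2) * L^(((j:ℝ)+1)+1/2) := by
      rw [← Real.rpow_natCast (L^((j:ℝ)+1/2)) 2, ← Real.rpow_mul hL.le, ← Real.rpow_add hL]
      congr 1
      push_cast
      ring
    calc A j^2 = (L^((j:ℝ)+1/2))^2 * Iq j := by
          rw [hA_eq j, mul_pow, Real.sq_sqrt (hIq_nonneg j)]
      _ ≤ (L^((j:ℝ)+1/2))^2 * (2*(Real.sqrt (R (j-1)) * Real.sqrt (R j))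
            + Real.sqrt (Iq (j-1)) * Real.sqrt (Iq (j+1))) :=
          mul_le_mul_of_nonneg_left hstep (by positivity)
      _ = 2*S (j-1)*S j + A (j-1)*A (j+1) := by
          simp only [hSdef]
          rw [hA_eq (j-1), hA_eq (j+1), cast1 j, hcast]
          calc (L^((j:ℝ)+1/2))^2 * (2*(Real.sqrt (R (j-1)) * Real.sqrt (R j))
                + Real.sqrt (Iq (j-1)) * Real.sqrt (Iq (j+1)))
              = 2*((L^((j:ℝ)+1/2))^2 * (Real.sqrt (R (j-1)) * Real.sqrt (R j)))
                + ((L^((j:ℝ)+1/2))^2) * (Real.sqrt (Iq (j-1)) * Real.sqrt (Iq (j+1))) := by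
                ring
            _ = 2*(L^(((j:ℝ)-1)+1) * Real.sqrt (R (j-1)))*(L^((j:ℝ)+1) * Real.sqrt (R j))
                + (L^(((j:ℝ)-1)+1/2) * Real.sqrt (Iq (j-1)))
                  * (L^(((j:ℝ)+1)+1/2) * Real.sqrt (Iq (j+1))) := by
                nth_rewrite 1 [E4]
                nth_rewrite 1 [E5]
                ring
  -- Hölder step
  have hHold : knorm f i p ≤ S i ^ (1 - 2/p) * A i ^ ((2:ℝ)/p) := by
    set K := Real.sqrt (R i) with hKdef
    have hK0 : (0:ℝ) ≤ K := Real.sqrt_nonneg _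
    have hubd : ∀ x ∈ Icc (0:ℝ) 1, ‖u i x‖ ≤ K := by
      intro x hx
      have h2 : ‖u i x‖^2 ≤ R i := GN_agmon hf hd i hx
      calc ‖u i x‖ = Real.sqrt (‖u i x‖^2) := (Real.sqrt_sq (norm_nonneg _)).symm
        _ ≤ K := Real.sqrt_le_sqrt h2
    have hpt : ∀ x ∈ Icc (0:ℝ) 1, ‖u i x‖ ^ p * v x ≤ K^(p-2) * (‖u i x‖^2 * v x) := by
      intro x hx
      have e1 : ‖u i x‖ ^ p = ‖u i x‖^(p-2) * ‖u i x‖^((2:ℕ):ℝ) := by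
        rw [← Real.rpow_add' (norm_nonneg _) (by push_cast; intro h; exact hp0' (by linarith))]
        congr 1
        push_cast
        ring
      have e2 : ‖u i x‖^((2:ℕ):ℝ) = ‖u i x‖^2 := Real.rpow_natCast _ 2
      have e3 : ‖u i x‖^(p-2) ≤ K^(p-2) :=
        Real.rpow_le_rpow (norm_nonneg _) (hubd x hx) (by linarith)
      calc ‖u i x‖^p * v x = ‖u i x‖^(p-2) * (‖u i x‖^2 * v x) := by
            rw [e1, e2]; ring
        _ ≤ K^(p-2) * (‖u i x‖^2 * v x) :=
            mul_le_mul_of_nonneg_right e3 (by positivity)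
    have hint : (∫ x in (0:ℝ)..1, ‖u i x‖ ^ p * v x) ≤ K^(p-2) * Iq i := by
      have h1 : (∫ x in (0:ℝ)..1, ‖u i x‖ ^ p * v x)
          ≤ ∫ x in (0:ℝ)..1, K^(p-2) * (‖u i x‖^2 * v x) := by
        apply intervalIntegral.integral_mono_on (by norm_num) ?_ ?_ hpt
        · exact GN_ii ((((GN_u_cont hf hd i).norm).rpow_const
            (fun x hx => Or.inr hp0.le)).mul hvc.continuousOn)
        · exact GN_ii (continuousOn_const.mul
            ((((GN_u_cont hf hd i).norm).pow 2).mul hvc.continuousOn))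
      rwa [intervalIntegral.integral_const_mul] at h1
    have hInn : (0:ℝ) ≤ ∫ x in (0:ℝ)..1, ‖u i x‖ ^ p * v x :=
      intervalIntegral.integral_nonneg (by norm_num) fun t ht => by positivity
    have houter : (∫ x in (0:ℝ)..1, ‖u i x‖ ^ p * v x) ^ ((1:ℝ)/p)
        ≤ (K^(p-2) * Iq i)^((1:ℝ)/p) :=
      Real.rpow_le_rpow hInn hint (by positivity)
    have hsplit : (K^(p-2) * Iq i)^((1:ℝ)/p) = K^((p-2)/p) * (Iq i)^((1:ℝ)/p) := by
      rw [Real.mul_rpow (Real.rpow_nonneg hK0 _) (hIq_nonneg i), ← Real.rpow_mul hK0,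
        mul_one_div]
    have hknorm : knorm f i p
        = L^((i:ℝ)+1-1/p) * (∫ x in (0:ℝ)..1, ‖u i x‖ ^ p * v x) ^ ((1:ℝ)/p) := rfl
    calc knorm f i p
        = L^((i:ℝ)+1-1/p) * (∫ x in (0:ℝ)..1, ‖u i x‖ ^ p * v x) ^ ((1:ℝ)/p) := hknorm
      _ ≤ L^((i:ℝ)+1-1/p) * (K^((p-2)/p) * (Iq i)^((1:ℝ)/p)) := by
          rw [← hsplit]
          exact mul_le_mul_of_nonneg_left houter (Real.rpow_nonneg hL.le _)
      _ = S i ^ (1-2/p) * A i ^ ((2:ℝ)/p) := by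
          rw [hA_eq i]
          have hSi : S i = L^((i:ℝ)+1) * K := rfl
          rw [hSi, Real.mul_rpow (Real.rpow_nonneg hL.le _) hK0,
            Real.mul_rpow (Real.rpow_nonneg hL.le _) (Real.sqrt_nonneg _),
            ← Real.rpow_mul hL.le, ← Real.rpow_mul hL.le]
          have eK : K^((p-2)/p) = K^(1-2/p) := by
            congr 1
            field_simp
          have eI : Real.sqrt (Iq i) ^ ((2:ℝ)/p) = (Iq i)^((1:ℝ)/p) := by
            rw [Real.sqrt_eq_rpow, ← Real.rpow_mul (hIq_nonneg i)]
            congr 1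
            field_simp
          have eL : L^((i:ℝ)+1-1/p) = L^(((i:ℝ)+1)*(1-2/p)) * L^(((i:ℝ)+1/2)*((2:ℝ)/p)) := by
            rw [← Real.rpow_add hL]
            congr 1
            field_simp
            ring
          rw [eK, eI, eL]
          ring
  -- chain
  set B := knormSum f k 2 with hBdef'
  have hBsum : B = ∑ m ∈ Finset.range (k+1), A m := rfl
  have hB_nonneg : 0 ≤ B := by
    rw [hBsum]
    exact Finset.sum_nonneg fun m _ => hA_nonneg m
  have hAB : ∀ j, j ≤ k → A j ≤ B := by
    intro j hj
    rw [hBsum]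
    exact Finset.single_le_sum (fun m _ => hA_nonneg m) (Finset.mem_range.2 (by omega))
  have hchain : ∀ j, j ≤ k → A j ≤ Ck * (A 0 ^ (1 - (j:ℝ)/k) * B ^ ((j:ℝ)/k)) :=
    GN_chain k hk A S hA_nonneg hS_nonneg (fun j _ => hAg j) (fun j hj1 _ => hIBPle j hj1)
  have hαnum : 1 - αe > 0 := by
    rw [hαdef]
    rw [gt_iff_lt, sub_pos, div_lt_one hkR]
    have h1 : (i:ℝ) + 1 ≤ (k:ℝ) := by exact_mod_cast hik
    have h2 : (0:ℝ) < 1/p := by positivity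
    linarith
  have hA0eq : A 0 = knorm f 0 2 := rfl
  clear_value u v L Iq CSq R A S B Ck
  rcases eq_or_lt_of_le (hA_nonneg 0) with hA00 | hA00
  · -- degenerate case : knorm f 0 2 = 0
    have hik' : (0:ℝ) < 1 - (i:ℝ)/k := by
      rw [sub_pos, div_lt_one hkR]
      exact_mod_cast hik
    have hAi0 : A i = 0 := by
      have h := hchain i (le_of_lt hik)
      rw [← hA00, Real.zero_rpow (ne_of_gt hik'), zero_mul, mul_zero] at h
      exact le_antisymm h (hA_nonneg i)
    have hLHS : knorm f i p ≤ 0 := by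
      have h := hHold
      rw [hAi0, Real.zero_rpow (by positivity : (2:ℝ)/p ≠ 0), mul_zero] at h
      exact h
    calc knorm f i p ≤ 0 := hLHS
      _ ≤ 3 * Ck * knorm f 0 2 ^ (1 - αe) * B ^ αe := by
          apply mul_nonneg
          · apply mul_nonneg (by linarith : (0:ℝ) ≤ 3 * Ck)
            exact Real.rpow_nonneg (GN_knorm_nonneg f 0 2) _
          · exact Real.rpow_nonneg hB_nonneg _
  · -- main case
    have hB0 : 0 < B := lt_of_lt_of_le hA00 (hAB 0 (Nat.zero_le k))
    have hA0B : A 0 ≤ B := hAB 0 (Nat.zero_le k)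
    set σ : ℝ := ((i:ℝ) + 1/2)/k with hσdef
    set G : ℕ → ℝ := fun j => A 0 ^ (1 - (j:ℝ)/k) * B ^ ((j:ℝ)/k) with hGdef
    have hGpos : ∀ j, 0 < G j := fun j =>
      mul_pos (Real.rpow_pos_of_pos hA00 _) (Real.rpow_pos_of_pos hB0 _)
    set H : ℝ := A 0 ^ (1 - σ) * B ^ σ with hHdef
    have hHpos : 0 < H :=
      mul_pos (Real.rpow_pos_of_pos hA00 _) (Real.rpow_pos_of_pos hB0 _)
    have hGH : G i * G (i+1) = H^2 := by
      simp only [hGdef, hHdef]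
      rw [cast1 i]
      calc (A 0 ^ (1 - (i:ℝ)/k) * B ^ ((i:ℝ)/k))
            * (A 0 ^ (1 - ((i:ℝ)+1)/k) * B ^ (((i:ℝ)+1)/k))
          = (A 0 ^ (1 - (i:ℝ)/k) * A 0 ^ (1 - ((i:ℝ)+1)/k))
            * (B ^ ((i:ℝ)/k) * B ^ (((i:ℝ)+1)/k)) := by ring
        _ = A 0 ^ ((1 - (i:ℝ)/k) + (1 - ((i:ℝ)+1)/k)) * B ^ ((i:ℝ)/k + ((i:ℝ)+1)/k) := by
            rw [← Real.rpow_add hA00, ← Real.rpow_add hB0]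
        _ = A 0 ^ ((1-σ)*2) * B ^ (σ*2) := by
            congr 1
            · congr 1
              rw [hσdef]
              field_simp
              ring
            · congr 1
              rw [hσdef]
              field_simp
              ring
        _ = (A 0 ^ (1-σ) * B ^ σ)^2 := by
            rw [Real.rpow_mul hA00.le, Real.rpow_mul hB0.le,
              show (2:ℝ) = ((2:ℕ):ℝ) by norm_num,
              Real.rpow_natCast, Real.rpow_natCast, mul_pow]
    have hGiH : G i ≤ H := by
      have hfact : H = G i * (B ^ ((1:ℝ)/(2*k)) * (A 0 ^ ((1:ℝ)/(2*k)))⁻¹) := by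
        simp only [hGdef, hHdef]
        calc A 0 ^ (1-σ) * B ^ σ
            = (A 0 ^ ((1 - (i:ℝ)/k) + (-((1:ℝ)/(2*k)))))
              * (B ^ ((i:ℝ)/k + (1:ℝ)/(2*k))) := by
              congr 1
              · congr 1
                rw [hσdef]
                field_simp
                ring
              · congr 1
                rw [hσdef]
                field_simp
          _ = (A 0 ^ (1 - (i:ℝ)/k) * A 0 ^ (-((1:ℝ)/(2*k))))
              * (B ^ ((i:ℝ)/k) * B ^ ((1:ℝ)/(2*k))) := by
              rw [← Real.rpow_add hA00, ← Real.rpow_add hB0]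
          _ = A 0 ^ (1 - (i:ℝ)/k) * B ^ ((i:ℝ)/k)
              * (B ^ ((1:ℝ)/(2*k)) * (A 0 ^ ((1:ℝ)/(2*k)))⁻¹) := by
              rw [Real.rpow_neg hA00.le]
              ring
      have hq1 : (1:ℝ) ≤ B ^ ((1:ℝ)/(2*k)) * (A 0 ^ ((1:ℝ)/(2*k)))⁻¹ := by
        have hle : A 0 ^ ((1:ℝ)/(2*k)) ≤ B ^ ((1:ℝ)/(2*k)) :=
          Real.rpow_le_rpow hA00.le hA0B (by positivity)
        have hpos : (0:ℝ) < A 0 ^ ((1:ℝ)/(2*k)) := Real.rpow_pos_of_pos hA00 _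
        calc (1:ℝ) = A 0 ^ ((1:ℝ)/(2*k)) * (A 0 ^ ((1:ℝ)/(2*k)))⁻¹ :=
              (mul_inv_cancel₀ hpos.ne').symm
          _ ≤ B ^ ((1:ℝ)/(2*k)) * (A 0 ^ ((1:ℝ)/(2*k)))⁻¹ :=
              mul_le_mul_of_nonneg_right hle (inv_nonneg.2 hpos.le)
      rw [hfact]
      exact le_mul_of_one_le_right (hGpos i).le hq1
    have h2' : A i ≤ Ck * G i := hchain i hik.le
    have h3' : A (i+1) ≤ Ck * G (i+1) := hchain (i+1) (by omega)
    clear_value σ G H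
    have hSiH : S i ≤ 2 * Ck * H := by
      have h1 : S i ^2 ≤ 2*A i*A (i+1) + A i^2 := hAg i
      have m1 : A i * A (i+1) ≤ (Ck*G i)*(Ck*G (i+1)) :=
        mul_le_mul h2' h3' (hA_nonneg _) (mul_nonneg hCk0.le (hGpos _).le)
      have m2 : A i^2 ≤ (Ck*G i)^2 := pow_le_pow_left₀ (hA_nonneg i) h2' 2
      have hG2 : G i^2 ≤ H^2 := pow_le_pow_left₀ (hGpos i).le hGiH 2
      have h6 : S i^2 ≤ (2*Ck*H)^2 := by
        calc S i^2 ≤ 2*((Ck*G i)*(Ck*G (i+1))) + (Ck*G i)^2 := by linarith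
          _ = 2*Ck^2*(G i*G (i+1)) + Ck^2*G i^2 := by ring
          _ = 2*Ck^2*H^2 + Ck^2*G i^2 := by rw [hGH]
          _ ≤ 2*Ck^2*H^2 + Ck^2*H^2 := by
              have := mul_le_mul_of_nonneg_left hG2 (sq_nonneg Ck)
              linarith
          _ ≤ (2*Ck*H)^2 := by nlinarith [sq_nonneg (Ck*H)]
      calc S i = Real.sqrt (S i^2) := (Real.sqrt_sq (hS_nonneg i)).symm
        _ ≤ Real.sqrt ((2*Ck*H)^2) := Real.sqrt_le_sqrt h6
        _ = 2*Ck*H := Real.sqrt_sq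
            (mul_nonneg (mul_nonneg (by norm_num) hCk0.le) hHpos.le)
    have ep1nn : (0:ℝ) ≤ 1 - 2/p := by
      have : 2/p ≤ 1 := by
        rw [div_le_one hp0]
        exact hp
      linarith
    have ep2pos : (0:ℝ) < (2:ℝ)/p := by positivity
    have hHG : H ^ (1-2/p) * G i ^ ((2:ℝ)/p) = A 0 ^ (1-αe) * B ^ αe := by
      simp only [hHdef, hGdef]
      rw [Real.mul_rpow (Real.rpow_nonneg hA00.le _) (Real.rpow_nonneg hB0.le _),
        Real.mul_rpow (Real.rpow_nonneg hA00.le _) (Real.rpow_nonneg hB0.le _),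
        ← Real.rpow_mul hA00.le, ← Real.rpow_mul hB0.le,
        ← Real.rpow_mul hA00.le, ← Real.rpow_mul hB0.le]
      calc A 0 ^ ((1-σ)*(1-2/p)) * B ^ (σ*(1-2/p))
            * (A 0 ^ ((1 - (i:ℝ)/k)*((2:ℝ)/p)) * B ^ (((i:ℝ)/k)*((2:ℝ)/p)))
          = (A 0 ^ ((1-σ)*(1-2/p)) * A 0 ^ ((1 - (i:ℝ)/k)*((2:ℝ)/p)))
            * (B ^ (σ*(1-2/p)) * B ^ (((i:ℝ)/k)*((2:ℝ)/p))) := by ring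
        _ = A 0 ^ ((1-σ)*(1-2/p) + (1 - (i:ℝ)/k)*((2:ℝ)/p))
            * B ^ (σ*(1-2/p) + ((i:ℝ)/k)*((2:ℝ)/p)) := by
            rw [← Real.rpow_add hA00, ← Real.rpow_add hB0]
        _ = A 0 ^ (1-αe) * B ^ αe := by
            congr 1
            · congr 1
              rw [hσdef, hαdef]
              field_simp
              ring
            · congr 1
              rw [hσdef, hαdef]
              field_simp
              ring
    have hconst : (2*Ck) ^ (1-2/p) * Ck ^ ((2:ℝ)/p) ≤ 3*Ck := by
      have hCk2 : Ck ≤ 2*Ck := by linarith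
      have h2Ck : (0:ℝ) < 2*Ck := by linarith
      have c1 : Ck ^ ((2:ℝ)/p) ≤ (2*Ck) ^ ((2:ℝ)/p) :=
        Real.rpow_le_rpow hCk0.le hCk2 ep2pos.le
      calc (2*Ck) ^ (1-2/p) * Ck ^ ((2:ℝ)/p)
          ≤ (2*Ck) ^ (1-2/p) * (2*Ck) ^ ((2:ℝ)/p) :=
            mul_le_mul_of_nonneg_left c1 (Real.rpow_nonneg h2Ck.le _)
        _ = (2*Ck) ^ ((1-2/p) + (2:ℝ)/p) := (Real.rpow_add h2Ck _ _).symm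
        _ = 2*Ck := by
            rw [show (1-2/p) + (2:ℝ)/p = 1 by ring, Real.rpow_one]
        _ ≤ 3*Ck := by linarith
    calc knorm f i p ≤ S i ^ (1-2/p) * A i ^ ((2:ℝ)/p) := hHold
      _ ≤ (2*Ck*H) ^ (1-2/p) * (Ck * G i) ^ ((2:ℝ)/p) :=
          mul_le_mul (Real.rpow_le_rpow (hS_nonneg i) hSiH ep1nn)
            (Real.rpow_le_rpow (hA_nonneg i) h2' ep2pos.le)
            (Real.rpow_nonneg (hA_nonneg i) _)
            (Real.rpow_nonneg (mul_nonneg (mul_nonneg (by norm_num) hCk0.le) hHpos.le) _)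
      _ = ((2*Ck) ^ (1-2/p) * Ck ^ ((2:ℝ)/p)) * (H ^ (1-2/p) * G i ^ ((2:ℝ)/p)) := by
          rw [Real.mul_rpow (by linarith : (0:ℝ) ≤ 2*Ck) hHpos.le,
            Real.mul_rpow hCk0.le (hGpos i).le]
          ring
      _ = ((2*Ck) ^ (1-2/p) * Ck ^ ((2:ℝ)/p)) * (A 0 ^ (1-αe) * B ^ αe) := by rw [hHG]
      _ ≤ (3*Ck) * (A 0 ^ (1-αe) * B ^ αe) :=
          mul_le_mul_of_nonneg_right hconst
            (mul_nonneg (Real.rpow_nonneg hA00.le _) (Real.rpow_nonneg hB0.le _))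
      _ = 3 * Ck * knorm f 0 2 ^ (1-αe) * B ^ αe := by
          rw [← hA0eq]
          ring
end
end
end
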